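/- arXiv:2103.05049 — 10 statements merged into one kernel-verified Lean document; each statement's English description precedes it below -/
import Mathlib

section
/- For all natural numbers r, k, d ≥ 1 there exists a number W(r, k, d) ∈ ℕ such that for every colouring of ℤ^d with r colours and every N ≥ W(r, k, d), there exist positive integers k₁, …, k_d and integers l₁, …, l_d such that the d-dimensional grid of depth k, [k₁,…,k_d; l₁,…,l_d; k] := {(l₁ + m₁k₁, l₂ + m₂k₂, …, l_d + m_dk_d) : m₁,…,m_d ∈ {0,1,…,k}}, is contained in {0,1,…,N}^d and is monochromatic (all its points receive the same colour). -/
open Combinatorics Finset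

/-- van der Waerden's theorem in `ℤ^d`: for all `r, k, d ≥ 1` there is a
number `W` such that for every colouring of `ℤ^d` with `r` colours and every `N ≥ W`
there is a monochromatic `d`-dimensional grid of depth `k` contained in `{0,…,N}^d`. -/
theorem stmt_1 (r k d : ℕ) (hr : 1 ≤ r) (hk : 1 ≤ k) (hd : 1 ≤ d) :
    ∃ W : ℕ, ∀ (χ : (Fin d → ℤ) → Fin r) (N : ℕ), W ≤ N →
      ∃ kv lv : Fin d → ℤ,
        (∀ i, 0 < kv i) ∧
        (∀ m : Fin d → ℕ, (∀ i, m i ≤ k) →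
          ∀ i, 0 ≤ lv i + (m i : ℤ) * kv i ∧ lv i + (m i : ℤ) * kv i ≤ (N : ℤ)) ∧
        ∃ c : Fin r, ∀ m : Fin d → ℕ, (∀ i, m i ≤ k) →
          χ (fun i => lv i + (m i : ℤ) * kv i) = c := by
  classical
  obtain ⟨ι, _ifin, hι⟩ :=
    Combinatorics.Line.exists_mono_in_high_dimension (Fin d → Fin (k + 1)) (Fin r)
  refine ⟨k * Fintype.card ι, fun χ N hN => ?_⟩
  set α := Fin d → Fin (k + 1) with hα
  set C : (ι → α) → Fin r := fun w => χ (fun i => ∑ t, ((w t i : ℕ) : ℤ)) with hC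
  obtain ⟨l, c, hc⟩ := hι C
  set s : Finset ι := Finset.univ.filter (fun t => l.idxFun t = none) with hs
  have hspos : 0 < s.card := by
    obtain ⟨t, ht⟩ := l.proper
    exact Finset.card_pos.2 ⟨t, by simp [hs, ht]⟩
  set lv : Fin d → ℤ := fun i => ∑ t, ((l.idxFun t).elim 0 (fun a => ((a i : ℕ) : ℤ)))
    with hlv
  have key : ∀ (x : α) (i : Fin d),
      ∑ t, (((l x) t i : ℕ) : ℤ) = lv i + ((x i : ℕ) : ℤ) * s.card := by
    intro x i
    have h1 : ∀ t : ι, (((l x) t i : ℕ) : ℤ)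
        = (l.idxFun t).elim 0 (fun a => ((a i : ℕ) : ℤ))
          + (if l.idxFun t = none then ((x i : ℕ) : ℤ) else 0) := by
      intro t
      rcases h : l.idxFun t with _ | a <;>
        simp [Combinatorics.Line.coe_apply, h]
    rw [Finset.sum_congr rfl (fun t _ => h1 t), Finset.sum_add_distrib, hlv]
    congr 1
    rw [← Finset.sum_filter, Finset.sum_const, nsmul_eq_mul, mul_comm]
  -- bounds for points of the line, in ℤ
  have hbound : ∀ (x : α) (i : Fin d),
      0 ≤ ∑ t, (((l x) t i : ℕ) : ℤ) ∧
      ∑ t, (((l x) t i : ℕ) : ℤ) ≤ (k * Fintype.card ι : ℕ) := by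
    intro x i
    constructor
    · exact Finset.sum_nonneg fun t _ => Int.natCast_nonneg _
    · calc ∑ t, (((l x) t i : ℕ) : ℤ) ≤ ∑ _t : ι, (k : ℤ) := by
            refine Finset.sum_le_sum fun t _ => ?_
            exact_mod_cast Nat.lt_succ_iff.mp ((l x) t i).isLt
        _ = (k * Fintype.card ι : ℕ) := by
            rw [Finset.sum_const, nsmul_eq_mul]
            simp [Finset.card_univ, mul_comm]
  refine ⟨fun _ => (s.card : ℤ), lv, fun i => show (0:ℤ) < s.card by exact_mod_cast hspos, ?_, c, ?_⟩
  · intro m hm i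
    set x : α := fun i => ⟨m i, Nat.lt_succ_of_le (hm i)⟩ with hx
    have hxi : ((x i : ℕ) : ℤ) = (m i : ℤ) := rfl
    have := hbound x i
    rw [key x i, hxi] at this
    exact ⟨this.1, le_trans this.2 (by exact_mod_cast hN)⟩
  · intro m hm
    set x : α := fun i => ⟨m i, Nat.lt_succ_of_le (hm i)⟩ with hx
    have : (fun i => lv i + (m i : ℤ) * (s.card : ℤ))
        = fun i => ∑ t, (((l x) t i : ℕ) : ℤ) := by
      funext i
      rw [key x i]
    rw [this]
    exact hc x
end

section
/- Let Λ ⊆ ℝ^d be a Meyer set and k ∈ ℕ. Then the following are equivalent: (i) for every N ∈ ℕ, Λ contains an li-arithmetic progression of rank k and length N; (ii) for every n ≥ k and every N ∈ ℕ, Λ contains an n-dimensional arithmetic progression of rank k and length N. -/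
open scoped Pointwise

/-- A set is relatively dense if some radius `R > 0` works: every open ball of
radius `R` contains a point of the set. -/
def RelativelyDense {d : ℕ} (Λ : Set (EuclideanSpace ℝ (Fin d))) : Prop :=
  ∃ R > (0 : ℝ), ∀ x : EuclideanSpace ℝ (Fin d), ∃ y ∈ Λ, y ∈ Metric.ball x R

/-- A set is uniformly discrete if some radius `r > 0` works: every open ball of
radius `r` contains at most one point of the set. -/
def UniformlyDiscrete {d : ℕ} (S : Set (EuclideanSpace ℝ (Fin d))) : Prop :=
  ∃ r > (0 : ℝ), ∀ x : EuclideanSpace ℝ (Fin d), (S ∩ Metric.ball x r).Subsingleton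

/-- A Meyer set: relatively dense with `Λ - Λ` uniformly discrete. -/
def IsMeyerSet {d : ℕ} (Λ : Set (EuclideanSpace ℝ (Fin d))) : Prop :=
  RelativelyDense Λ ∧ UniformlyDiscrete (Λ - Λ)

/-- `Λ` contains an li-arithmetic progression of rank `k` and length `N`:
there are a starting point `s` and ratios `r₁, …, r_k`, linearly independent over `ℤ`,
with `s + ∑ cᵢ rᵢ ∈ Λ` for all integers `0 ≤ cᵢ ≤ N`. -/
def HasLiAP {d : ℕ} (Λ : Set (EuclideanSpace ℝ (Fin d))) (k N : ℕ) : Prop :=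
  ∃ (s : EuclideanSpace ℝ (Fin d)) (r : Fin k → EuclideanSpace ℝ (Fin d)),
    LinearIndependent ℤ r ∧
    ∀ c : Fin k → ℕ, (∀ i, c i ≤ N) → s + ∑ i, (c i : ℝ) • r i ∈ Λ

/-- `Λ` contains an `n`-dimensional arithmetic progression of length `N` whose rank
(the rank of the `ℤ`-module generated by its ratios) equals `rk`. -/
def HasAPOfRank {d : ℕ} (Λ : Set (EuclideanSpace ℝ (Fin d))) (n N rk : ℕ) : Prop :=
  ∃ (s : EuclideanSpace ℝ (Fin d)) (r : Fin n → EuclideanSpace ℝ (Fin d)),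
    Module.finrank ℤ (Submodule.span ℤ (Set.range r)) = rk ∧
    ∀ c : Fin n → ℕ, (∀ i, c i ≤ N) → s + ∑ i, (c i : ℝ) • r i ∈ Λ

set_option synthInstance.maxHeartbeats 1000000
set_option maxHeartbeats 1000000

lemma aux_li_to_finrank {d k : ℕ} {r : Fin k → EuclideanSpace ℝ (Fin d)}
    (h : LinearIndependent ℤ r) :
    Module.finrank ℤ (Submodule.span ℤ (Set.range r)) = k := by
  simpa using Module.finrank_eq_card_basis (Module.Basis.span h)

lemma aux_finrank_to_li {d k : ℕ} {r : Fin k → EuclideanSpace ℝ (Fin d)}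
    (h : Module.finrank ℤ (Submodule.span ℤ (Set.range r)) = k) :
    LinearIndependent ℤ r := by
  classical
  set M := Submodule.span ℤ (Set.range r) with hM
  set W := Submodule.span ℚ (Set.range r) with hW
  haveI : Module.Finite ℤ M := Module.Finite.span_of_finite ℤ (Set.finite_range r)
  haveI : Module.Finite ℚ W := Module.Finite.span_of_finite ℚ (Set.finite_range r)
  haveI : Module.IsTorsionFree ℤ (EuclideanSpace ℝ (Fin d)) := Module.IsTorsionFree.trans_faithfulSMul ℤ ℝ _
  let b : Module.Basis (Module.Free.ChooseBasisIndex ℤ M) ℤ M := Module.Free.chooseBasis ℤ M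
  have hcard : Fintype.card (Module.Free.ChooseBasisIndex ℤ M) = k := by
    rw [← Module.finrank_eq_card_chooseBasisIndex, h]
  have hliZ : LinearIndependent ℤ (fun i => (b i : EuclideanSpace ℝ (Fin d))) :=
    b.linearIndependent.map' M.subtype (Submodule.ker_subtype M)
  have hliQ : LinearIndependent ℚ (fun i => (b i : EuclideanSpace ℝ (Fin d))) :=
    (LinearIndependent.iff_fractionRing ℤ ℚ).mp hliZ
  have hmem : ∀ i, (b i : EuclideanSpace ℝ (Fin d)) ∈ W := by
    intro i
    have hMW : M ≤ W.restrictScalars ℤ :=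
      Submodule.span_le.mpr (fun x hx => Submodule.subset_span hx)
    exact hMW (b i).2
  have hliW : LinearIndependent ℚ (fun i => (⟨b i, hmem i⟩ : W)) := by
    apply LinearIndependent.of_comp W.subtype
    exact hliQ
  have hk_le : k ≤ Module.finrank ℚ W := by
    rw [← hcard]; exact hliW.fintype_card_le_finrank
  have hle : Module.finrank ℚ W ≤ k := by
    simpa [Set.finrank] using finrank_range_le_card (R := ℚ) r
  rw [LinearIndependent.iff_fractionRing ℤ ℚ, linearIndependent_iff_card_eq_finrank_span]
  simpa [Set.finrank] using (le_antisymm hle hk_le).symm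


/-- for a Meyer set `Λ ⊆ ℝ^d` and `k ∈ ℕ`, `Λ` contains li-arithmetic
progressions of rank `k` and every length iff for every dimension `n ≥ k` and every
length `N`, `Λ` contains an `n`-dimensional arithmetic progression of rank `k` and
length `N`. -/
theorem stmt_4 {d : ℕ} (Λ : Set (EuclideanSpace ℝ (Fin d))) (hΛ : IsMeyerSet Λ)
    (k : ℕ) :
    (∀ N : ℕ, HasLiAP Λ k N) ↔ (∀ n : ℕ, k ≤ n → ∀ N : ℕ, HasAPOfRank Λ n N k) := by
  unfold HasLiAP HasAPOfRank
  constructor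
  · intro hLi n hk N
    obtain ⟨s, r, hli, hmem⟩ := hLi N
    classical
    refine ⟨s, fun i => if h : (i : ℕ) < k then r ⟨i, h⟩ else 0, ?_, ?_⟩
    · have hspan : Submodule.span ℤ
          (Set.range fun i : Fin n => if h : (i : ℕ) < k then r ⟨i, h⟩ else 0)
          = Submodule.span ℤ (Set.range r) := by
        apply le_antisymm
        · rw [Submodule.span_le]
          rintro x ⟨i, rfl⟩
          by_cases h : (i : ℕ) < k
          · simp only [dif_pos h]; exact Submodule.subset_span ⟨⟨i, h⟩, rfl⟩
          · simp only [dif_neg h]; exact Submodule.zero_mem _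
        · rw [Submodule.span_le]
          rintro x ⟨j, rfl⟩
          have hj : ((Fin.castLE hk j : Fin n) : ℕ) < k := j.isLt
          apply Submodule.subset_span
          exact ⟨Fin.castLE hk j, by simp only [dif_pos hj]; congr 1⟩
      rw [hspan]
      exact aux_li_to_finrank hli
    · intro c hc
      have h1 : ∑ i ∈ Finset.univ.map (Fin.castLEEmb hk),
            (c i : ℝ) • (if h : (i : ℕ) < k then r ⟨i, h⟩ else 0)
          = ∑ i : Fin n, (c i : ℝ) • (if h : (i : ℕ) < k then r ⟨i, h⟩ else 0) := by
        apply Finset.sum_subset (Finset.subset_univ _)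
        intro i _ hi
        have hik : ¬ (i : ℕ) < k := by
          intro hlt
          exact hi (Finset.mem_map.mpr ⟨⟨i, hlt⟩, Finset.mem_univ _, by
            simp [Fin.castLEEmb, Fin.castLE]⟩)
        simp [dif_neg hik]
      rw [← h1, Finset.sum_map]
      have h2 : ∀ j : Fin k, (c (Fin.castLEEmb hk j) : ℝ) •
            (if h : ((Fin.castLEEmb hk j : Fin n) : ℕ) < k then r ⟨_, h⟩ else 0)
          = (c (Fin.castLE hk j) : ℝ) • r j := by
        intro j
        have hj : ((Fin.castLEEmb hk j : Fin n) : ℕ) < k := j.isLt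
        rw [dif_pos hj]
        rfl
      rw [Finset.sum_congr rfl (fun j _ => h2 j)]
      exact hmem (fun j => c (Fin.castLE hk j)) (fun j => hc _)
  · intro hAP N
    obtain ⟨s, r, hrk, hmem⟩ := hAP k le_rfl N
    exact ⟨s, r, aux_finrank_to_li hrk, hmem⟩
end

section
/- Let (ℝ^d, ℝ^m, ℒ) be a fully Euclidean cut-and-project scheme and let W ⊆ ℝ^m be any set with nonempty interior. Then Λ(W) generates L := π₁(ℒ) as a group. In particular, the ℤ-module generated by Λ(W) is free of rank d + m, and there exist vectors r₁, …, r_{d+m} ∈ Λ(W) which are linearly independent over ℤ. -/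
/-- A lattice in a topological abelian group: a discrete subgroup with compact
quotient (spelled: there is a compact set of representatives). -/
def IsLattice {E : Type*} [AddCommGroup E] [TopologicalSpace E] (L : AddSubgroup E) : Prop :=
  DiscreteTopology L ∧ ∃ K : Set E, IsCompact K ∧ ∀ x : E, ∃ l ∈ L, x - l ∈ K

/-- A fully Euclidean cut-and-project scheme `(ℝ^d, ℝ^m, ℒ)`: `ℒ` is a lattice in
`ℝ^d × ℝ^m`, the first projection is injective on `ℒ`, and the image of `ℒ` under the
second projection is dense in `ℝ^m`. -/
def IsCPS (d m : ℕ)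
    (L : AddSubgroup (EuclideanSpace ℝ (Fin d) × EuclideanSpace ℝ (Fin m))) : Prop :=
  IsLattice L ∧ (∀ p ∈ L, ∀ q ∈ L, p.1 = q.1 → p = q) ∧
    Dense (Prod.snd '' (L : Set (EuclideanSpace ℝ (Fin d) × EuclideanSpace ℝ (Fin m))))

/-- The projection `Λ(W) = {x : ∃ y ∈ W, (x, y) ∈ ℒ}` of the points of the lattice
whose second coordinate lies in the window `W`. -/
def cutProject {α β : Type*} [AddCommGroup α] [AddCommGroup β]
    (L : AddSubgroup (α × β)) (W : Set β) : Set α :=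
  {x | ∃ y ∈ W, (x, y) ∈ L}

-- auxiliary: closure equality
theorem aux_closure {d m : ℕ}
    (L : AddSubgroup (EuclideanSpace ℝ (Fin d) × EuclideanSpace ℝ (Fin m)))
    (hdense : Dense (Prod.snd '' (L : Set (EuclideanSpace ℝ (Fin d) × EuclideanSpace ℝ (Fin m)))))
    (W : Set (EuclideanSpace ℝ (Fin m))) (hW : (interior W).Nonempty) :
    AddSubgroup.closure (cutProject L W)
        = L.map (AddMonoidHom.fst (EuclideanSpace ℝ (Fin d)) (EuclideanSpace ℝ (Fin m))) := by
  obtain ⟨w₀, hw₀⟩ := hW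
  obtain ⟨ε, hε, hball⟩ := Metric.isOpen_iff.mp isOpen_interior w₀ hw₀
  have hballW : Metric.ball w₀ ε ⊆ W := hball.trans interior_subset
  set S := AddSubgroup.closure (cutProject L W) with hS
  apply le_antisymm
  · rw [AddSubgroup.closure_le]
    rintro x ⟨y, _, hxy⟩
    exact ⟨(x, y), hxy, rfl⟩
  · rintro x ⟨l, hlL, rfl⟩
    -- key lemma
    have key : ∀ c ∈ L, ‖c.2‖ < ε → c.1 ∈ S := by
      intro c hc hcn
      have hpos : 0 < ε - ‖c.2‖ := by linarith
      obtain ⟨y, ⟨z, hzL, hzy⟩, hy⟩ := hdense.exists_mem_open Metric.isOpen_ball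
        ⟨w₀, Metric.mem_ball_self hpos⟩
      subst hzy
      have hz1 : z.1 ∈ cutProject L W := by
        refine ⟨z.2, hballW ?_, by simpa using hzL⟩
        exact Metric.ball_subset_ball (by linarith [norm_nonneg c.2]) hy
      have hz2 : z.1 + c.1 ∈ cutProject L W := by
        refine ⟨z.2 + c.2, hballW ?_, by exact L.add_mem hzL hc⟩
        rw [Metric.mem_ball]
        have h1 : dist (z.2 + c.2) z.2 = ‖c.2‖ := by
          rw [dist_eq_norm]; simp
        have := dist_triangle (z.2 + c.2) z.2 w₀
        rw [Metric.mem_ball] at hy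
        rw [h1] at this
        linarith
      have : c.1 = (z.1 + c.1) - z.1 := by abel
      rw [this]
      exact S.sub_mem (AddSubgroup.subset_closure hz2) (AddSubgroup.subset_closure hz1)
    obtain ⟨n, hn⟩ := exists_nat_gt (‖l.2‖ / (ε / 4))
    have hn0 : 0 < (n : ℝ) := lt_of_le_of_lt (div_nonneg (norm_nonneg _) (by linarith)) hn
    have hnl : ‖l.2‖ / n < ε / 4 := by
      rw [div_lt_iff₀ hn0]
      rw [div_lt_iff₀ (by linarith : (0:ℝ) < ε / 4)] at hn
      linarith [hn]
    have claim : ∀ k : ℕ, k ≤ n → ∀ z, z ∈ L →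
        dist z.2 (((k : ℝ) / n) • l.2) < ε / 4 → z.1 ∈ S := by
      intro k
      induction k with
      | zero =>
        intro _ z hz hd
        apply key z hz
        simp only [Nat.cast_zero, zero_div, zero_smul, dist_zero_right] at hd
        linarith
      | succ k ih =>
        intro hk z hz hd
        obtain ⟨y, ⟨z', hz'L, hzy'⟩, hy'⟩ := hdense.exists_mem_open Metric.isOpen_ball
          (⟨((k : ℝ) / n) • l.2, Metric.mem_ball_self (by linarith)⟩ :
            (Metric.ball (((k : ℝ) / n) • l.2) (ε / 4)).Nonempty)
        subst hzy'
        have h1 : z'.1 ∈ S := ih (Nat.le_of_succ_le hk) z' hz'L hy'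
        have hmid : dist (((((k + 1 : ℕ)) : ℝ) / n) • l.2) (((k : ℝ) / n) • l.2)
            = ‖l.2‖ / n := by
          rw [dist_eq_norm, ← sub_smul, norm_smul]
          have : (((k + 1 : ℕ)) : ℝ) / n - (k : ℝ) / n = 1 / n := by
            push_cast
            field_simp
            ring
          rw [this, Real.norm_eq_abs, abs_of_pos (by positivity : (0:ℝ) < 1 / n)]
          ring
        have h2 : (z - z').1 ∈ S := by
          apply key _ (L.sub_mem hz hz'L)
          have t1 := dist_triangle z.2 (((((k + 1 : ℕ)) : ℝ) / n) • l.2) z'.2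
          have t2 := dist_triangle (((((k + 1 : ℕ)) : ℝ) / n) • l.2)
            (((k : ℝ) / n) • l.2) z'.2
          rw [Metric.mem_ball] at hy'
          have : ‖(z - z').2‖ = dist z.2 z'.2 := by
            rw [dist_eq_norm]; rfl
          rw [this]
          rw [dist_comm z'.2 _] at hy'
          rw [hmid] at t2
          have := dist_comm (((((k + 1 : ℕ)) : ℝ) / n) • l.2) z'.2
          linarith
        have : z.1 = z'.1 + (z - z').1 := by
          simp
        rw [this]
        exact S.add_mem h1 h2
    apply claim n le_rfl l hlL
    have : ((n : ℝ) / n) • l.2 = l.2 := by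
      rw [div_self (ne_of_gt hn0), one_smul]
    rw [this]
    simpa using (by linarith : (0:ℝ) < ε / 4)

theorem aux_span_top {E : Type*} [NormedAddCommGroup E] [NormedSpace ℝ E]
    [FiniteDimensional ℝ E] (L : AddSubgroup E) (K : Set E) (hKc : IsCompact K)
    (hKrep : ∀ x : E, ∃ l ∈ L, x - l ∈ K) :
    Submodule.span ℝ (L : Set E) = ⊤ := by
  by_contra h
  obtain ⟨f, hf0, hker⟩ := (Submodule.span ℝ (L : Set E)).exists_le_ker_of_lt_top
    (lt_top_iff_ne_top.mpr h)
  have hfc : Continuous f := f.continuous_of_finiteDimensional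
  obtain ⟨C, hC⟩ := isBounded_iff_forall_norm_le.mp (hKc.image hfc).isBounded
  obtain ⟨v, hv⟩ : ∃ v, f v ≠ 0 := by
    by_contra hv
    push_neg at hv
    exact hf0 (LinearMap.ext fun x => hv x)
  set x := ((C + 1) / f v) • v with hx
  obtain ⟨l, hl, hxl⟩ := hKrep x
  have hfl : f l = 0 := hker (Submodule.subset_span hl)
  have hfx : f x = C + 1 := by
    rw [hx, map_smul, smul_eq_mul, div_mul_cancel₀ _ hv]
  have h1 : ‖f (x - l)‖ ≤ C := hC _ ⟨x - l, hxl, rfl⟩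
  have h2 : f (x - l) = C + 1 := by rw [map_sub, hfl, hfx, sub_zero]
  rw [h2, Real.norm_eq_abs] at h1
  have := le_abs_self (C + 1)
  linarith


/-- in a fully Euclidean CPS `(ℝ^d, ℝ^m, ℒ)`, for any window `W ⊆ ℝ^m`
with nonempty interior, `Λ(W)` generates `L = π₁(ℒ)` as a group; in particular the
`ℤ`-module generated by `Λ(W)` is free of finite rank `d + m`, and there exist
`d + m` vectors in `Λ(W)` which are linearly independent over `ℤ`. -/
theorem stmt_5 {d m : ℕ}
    (L : AddSubgroup (EuclideanSpace ℝ (Fin d) × EuclideanSpace ℝ (Fin m)))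
    (hL : IsCPS d m L) (W : Set (EuclideanSpace ℝ (Fin m)))
    (hW : (interior W).Nonempty) :
    AddSubgroup.closure (cutProject L W)
        = L.map (AddMonoidHom.fst (EuclideanSpace ℝ (Fin d)) (EuclideanSpace ℝ (Fin m))) ∧
      Module.Free ℤ (Submodule.span ℤ (cutProject L W)) ∧
      Module.Finite ℤ (Submodule.span ℤ (cutProject L W)) ∧
      Module.finrank ℤ (Submodule.span ℤ (cutProject L W)) = d + m ∧
      ∃ r : Fin (d + m) → EuclideanSpace ℝ (Fin d),
        (∀ i, r i ∈ cutProject L W) ∧ LinearIndependent ℤ r := by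
    classical
  obtain ⟨⟨hdisc, K, hKc, hKrep⟩, hinj, hdense⟩ := hL
  have hclos := aux_closure L hdense W hW
  refine ⟨hclos, ?_⟩
  set L' : Submodule ℤ (EuclideanSpace ℝ (Fin d) × EuclideanSpace ℝ (Fin m)) := AddSubgroup.toIntSubmodule L with hL'def
  haveI : DiscreteTopology L' := hdisc
  haveI : IsZLattice ℝ L' := ⟨aux_span_top L K hKc hKrep⟩
  haveI : Module.Free ℤ L' := ZLattice.module_free ℝ L'
  haveI : Module.Finite ℤ L' := ZLattice.module_finite ℝ L'
  have hrank : Module.finrank ℤ L' = d + m := by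
    rw [ZLattice.rank ℝ L', Module.finrank_prod, finrank_euclideanSpace_fin,
      finrank_euclideanSpace_fin]
  set g : L' →ₗ[ℤ] EuclideanSpace ℝ (Fin d) := (LinearMap.fst ℤ (EuclideanSpace ℝ (Fin d)) (EuclideanSpace ℝ (Fin m))).comp L'.subtype with hgdef
  have hginj : Function.Injective g := by
    intro a b hab
    exact Subtype.ext (hinj a a.2 b b.2 hab)
  have hrg : LinearMap.range g = Submodule.span ℤ (cutProject L W) := by
    apply Submodule.toAddSubgroup_injective
    rw [Submodule.span_int_eq_addSubgroupClosure, hclos]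
    ext x
    constructor
    · rintro ⟨a, rfl⟩
      exact ⟨(a : EuclideanSpace ℝ (Fin d) × EuclideanSpace ℝ (Fin m)), a.2, rfl⟩
    · rintro ⟨p, hp, rfl⟩
      exact ⟨⟨p, hp⟩, rfl⟩
  have e : L' ≃ₗ[ℤ] Submodule.span ℤ (cutProject L W) :=
    (LinearEquiv.ofInjective g hginj).trans (LinearEquiv.ofEq _ _ hrg)
  refine ⟨Module.Free.of_equiv e, Module.Finite.equiv e, by rw [← e.finrank_eq, hrank], ?_⟩
  -- linearly independent vectors inside cutProject
  set ι := Module.Free.ChooseBasisIndex ℤ L'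
  set b : Module.Basis ι ℤ L' := Module.Free.chooseBasis ℤ L'
  have hcard : Fintype.card ι = d + m := by
    rw [← Module.finrank_eq_card_chooseBasisIndex, hrank]
  set v : ι → EuclideanSpace ℝ (Fin d) := fun i => g (b i) with hvdef
  have hv : LinearIndependent ℤ v :=
    b.linearIndependent.map' g (LinearMap.ker_eq_bot.mpr hginj)
  have hvQ : LinearIndependent ℚ v := (LinearIndependent.iff_fractionRing ℤ ℚ).mp hv
  have hvmem : ∀ i, v i ∈ Submodule.span ℚ (cutProject L W) := by
    intro i
    apply Submodule.span_subset_span ℤ ℚ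
    rw [← hrg]
    exact ⟨b i, rfl⟩
  obtain ⟨t, htsub, htspan, htli⟩ := exists_linearIndependent ℚ (cutProject L W)
  have h1 : ((d + m : ℕ) : Cardinal) ≤ Module.rank ℚ (Submodule.span ℚ (cutProject L W)) := by
    have hli : LinearIndependent ℚ
        (fun i => (⟨v i, hvmem i⟩ : Submodule.span ℚ (cutProject L W))) := by
      apply LinearIndependent.of_comp (Submodule.span ℚ (cutProject L W)).subtype
      exact hvQ
    calc ((d + m : ℕ) : Cardinal) = Cardinal.mk ι := by
          rw [Cardinal.mk_fintype, hcard]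
      _ ≤ _ := hli.cardinal_le_rank
  have h2 : Module.rank ℚ (Submodule.span ℚ (cutProject L W)) = Cardinal.mk t := by
    rw [← htspan, rank_span_set htli]
  rw [h2] at h1
  have hemb : Nonempty (Fin (d + m) ↪ ↥t) := by
    rw [← Cardinal.le_def, Cardinal.mk_fin]
    exact h1
  obtain ⟨emb⟩ := hemb
  refine ⟨fun i => ((emb i : t) : EuclideanSpace ℝ (Fin d)), fun i => htsub (emb i).2, ?_⟩
  have hli2 : LinearIndependent ℚ (fun i : Fin (d + m) => ((emb i : t) : EuclideanSpace ℝ (Fin d))) :=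
    htli.comp emb emb.injective
  exact (LinearIndependent.iff_fractionRing ℤ ℚ).mpr hli2
end

section
/- Let (ℝ^d, ℝ^m, ℒ) be a fully Euclidean cut-and-project scheme and let W ⊆ ℝ^m be precompact with nonempty interior. Then for each N ∈ ℕ there exists R > 0 such that for all y ∈ ℝ^d there exist s ∈ ℝ^d and vectors r₁, …, r_{d+m} ∈ ℝ^d linearly independent over ℤ such that s + ∑_{i=1}^{d+m} cᵢrᵢ ∈ Λ(W) ∩ B_R(y) for all integers 0 ≤ cᵢ ≤ N; that is, Λ(W) ∩ B_R(y) contains an li-arithmetic progression of length N and rank d + m. -/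
/-- A cocompact subgroup of a finite-dimensional real normed space spans the
whole space. -/
theorem span_eq_top_of_cocompact {E : Type*} [NormedAddCommGroup E] [NormedSpace ℝ E]
    [FiniteDimensional ℝ E] (L : AddSubgroup E) (K : Set E) (hK : IsCompact K)
    (hcov : ∀ x : E, ∃ l ∈ L, x - l ∈ K) :
    Submodule.span ℝ (L : Set E) = ⊤ := by
  by_contra h
  obtain ⟨f, hf0, hfker⟩ :=
    Submodule.exists_dual_map_eq_bot_of_lt_top
      (p := Submodule.span ℝ (L : Set E)) (lt_top_iff_ne_top.mpr h) inferInstance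
  have hker : ∀ v ∈ Submodule.span ℝ (L : Set E), f v = 0 := by
    intro v hv
    have h1 : f v ∈ Submodule.map f (Submodule.span ℝ (L : Set E)) :=
      Submodule.mem_map_of_mem hv
    rw [hfker] at h1
    exact (Submodule.mem_bot ℝ).mp h1
  -- pick x₀ with f x₀ = 1
  obtain ⟨u, hu⟩ := DFunLike.ne_iff.mp hf0
  simp only [LinearMap.zero_apply] at hu
  set x₀ : E := (f u)⁻¹ • u with hx₀
  have hfx₀ : f x₀ = 1 := by
    rw [hx₀, map_smul, smul_eq_mul, inv_mul_cancel₀ hu]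
  -- K is bounded
  obtain ⟨C, hC⟩ := (Bornology.IsBounded.exists_norm_le hK.isBounded : ∃ C, ∀ x ∈ K, ‖x‖ ≤ C)
  have hC0 : 0 ≤ C := by
    obtain ⟨l, _, hl⟩ := hcov 0
    exact le_trans (norm_nonneg _) (hC _ hl)
  -- f is continuous
  let φ : E →L[ℝ] ℝ := LinearMap.toContinuousLinearMap f
  set T : ℝ := ‖φ‖ * C + 1 with hT
  obtain ⟨l, hlL, hlK⟩ := hcov (T • x₀)
  have h1 : f (T • x₀ - l) = T := by
    rw [map_sub, map_smul, hfx₀, hker l (Submodule.subset_span hlL), smul_eq_mul,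
      mul_one, sub_zero]
  have h2 : |f (T • x₀ - l)| ≤ ‖φ‖ * C := by
    have := φ.le_opNorm (T • x₀ - l)
    have hφf : φ (T • x₀ - l) = f (T • x₀ - l) := rfl
    calc |f (T • x₀ - l)| = ‖φ (T • x₀ - l)‖ := by rw [hφf]; rfl
      _ ≤ ‖φ‖ * ‖T • x₀ - l‖ := φ.le_opNorm _
      _ ≤ ‖φ‖ * C := by
          exact mul_le_mul_of_nonneg_left (hC _ hlK) (norm_nonneg φ)
  rw [h1] at h2
  have : T ≤ ‖φ‖ * C := le_trans (le_abs_self T) h2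
  rw [hT] at this
  linarith

/-- for a fully Euclidean model set `Λ(W)` and each `N ∈ ℕ` there is
`R > 0` such that every ball `B_R(y)` contains an li-arithmetic progression of
length `N` and rank `d + m` lying inside `Λ(W)`. -/
theorem stmt_8 {d m : ℕ}
    (L : AddSubgroup (EuclideanSpace ℝ (Fin d) × EuclideanSpace ℝ (Fin m)))
    (hL : IsCPS d m L) (W : Set (EuclideanSpace ℝ (Fin m)))
    (hWc : IsCompact (closure W)) (hWi : (interior W).Nonempty) (N : ℕ) :
    ∃ R > (0 : ℝ), ∀ y : EuclideanSpace ℝ (Fin d),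
      ∃ (s : EuclideanSpace ℝ (Fin d)) (r : Fin (d + m) → EuclideanSpace ℝ (Fin d)),
        LinearIndependent ℤ r ∧
        ∀ c : Fin (d + m) → ℕ, (∀ i, c i ≤ N) →
          s + ∑ i, (c i : ℝ) • r i ∈ cutProject L W ∩ Metric.ball y R := by
  classical
  obtain ⟨⟨_disc, K, hKc, hKcov⟩, hinj, hdense⟩ := hL
  obtain ⟨w₀, hw₀⟩ := hWi
  obtain ⟨ε, hε, hballi⟩ := Metric.isOpen_iff.mp isOpen_interior w₀ hw₀
  have hballW : Metric.ball w₀ ε ⊆ W := hballi.trans interior_subset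
  set δ : ℝ := ε / ((d + m) * (N + 1) + 1 : ℕ) with hδdef
  have hδ : 0 < δ := by
    apply div_pos hε
    positivity
  -- the set of lattice points with small second component
  set A : Set (EuclideanSpace ℝ (Fin d) × EuclideanSpace ℝ (Fin m)) := {p : (EuclideanSpace ℝ (Fin d) × EuclideanSpace ℝ (Fin m)) | p ∈ L ∧ ‖p.2‖ < δ} with hA
  have hAL : A ⊆ (L : Set (EuclideanSpace ℝ (Fin d) × EuclideanSpace ℝ (Fin m))) := fun p hp => hp.1
  set V : Submodule ℝ (EuclideanSpace ℝ (Fin d) × EuclideanSpace ℝ (Fin m)) := Submodule.span ℝ A with hV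
  set G : AddSubgroup (EuclideanSpace ℝ (Fin d) × EuclideanSpace ℝ (Fin m)) := AddSubgroup.closure A with hG
  have hGL : G ≤ L := (AddSubgroup.closure_le _).mpr hAL
  have hGV : (G : Set (EuclideanSpace ℝ (Fin d) × EuclideanSpace ℝ (Fin m))) ⊆ (V : Set (EuclideanSpace ℝ (Fin d) × EuclideanSpace ℝ (Fin m))) := by
    have : G ≤ V.toAddSubgroup := (AddSubgroup.closure_le _).mpr Submodule.subset_span
    exact this
  -- the closure of the image of G under snd contains a ball around 0
  set H : AddSubgroup (EuclideanSpace ℝ (Fin m)) :=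
    (G.map (AddMonoidHom.snd _ _)).topologicalClosure with hH
  have hHclosure : (H : Set (EuclideanSpace ℝ (Fin m))) =
      closure ((G.map (AddMonoidHom.snd _ _)) : Set (EuclideanSpace ℝ (Fin m))) := rfl
  have hballH : Metric.ball (0 : EuclideanSpace ℝ (Fin m)) δ ⊆ (H : Set _) := by
    intro t ht
    have h1 : t ∈ closure (Metric.ball (0 : EuclideanSpace ℝ (Fin m)) δ ∩
        (Prod.snd '' (L : Set (EuclideanSpace ℝ (Fin d) × EuclideanSpace ℝ (Fin m))))) :=
      hdense.open_subset_closure_inter Metric.isOpen_ball ht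
    have h2 : Metric.ball (0 : EuclideanSpace ℝ (Fin m)) δ ∩ (Prod.snd '' (L : Set (EuclideanSpace ℝ (Fin d) × EuclideanSpace ℝ (Fin m)))) ⊆
        ((G.map (AddMonoidHom.snd _ _)) : Set (EuclideanSpace ℝ (Fin m))) := by
      rintro v ⟨hv, p, hp, rfl⟩
      exact ⟨p, AddSubgroup.subset_closure ⟨hp, by simpa using mem_ball_zero_iff.mp hv⟩, rfl⟩
    rw [hHclosure]
    exact closure_mono h2 h1
  -- hence that closure is everything
  have hHtop : ∀ t : EuclideanSpace ℝ (Fin m), t ∈ H := by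
    intro t
    obtain ⟨k, hk⟩ := exists_nat_gt (‖t‖ / δ)
    have hk0 : 0 < (k : ℝ) := lt_of_le_of_lt (div_nonneg (norm_nonneg t) hδ.le) hk
    have hmem : ((k : ℝ))⁻¹ • t ∈ H := by
      apply hballH
      rw [mem_ball_zero_iff, norm_smul, norm_inv, Real.norm_natCast]
      calc (k : ℝ)⁻¹ * ‖t‖ = ‖t‖ / k := by rw [inv_mul_eq_div]
        _ < δ := by
            rw [div_lt_iff₀ hk0, mul_comm]
            exact (div_lt_iff₀ hδ).mp hk
    have := H.nsmul_mem hmem k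
    rwa [← Nat.cast_smul_eq_nsmul ℝ, smul_inv_smul₀ (ne_of_gt hk0)] at this
  -- every lattice point lies in the span of A
  have hLV : (L : Set (EuclideanSpace ℝ (Fin d) × EuclideanSpace ℝ (Fin m))) ⊆ (V : Set (EuclideanSpace ℝ (Fin d) × EuclideanSpace ℝ (Fin m))) := by
    intro p hp
    have hp2 : p.2 ∈ closure ((G.map (AddMonoidHom.snd _ _)) : Set _) := by
      rw [← hHclosure]; exact hHtop p.2
    obtain ⟨v, hv, hdist⟩ := Metric.mem_closure_iff.mp hp2 δ hδ
    obtain ⟨g, hgG, rfl⟩ := hv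
    have hpg : p - g ∈ A := by
      refine ⟨L.sub_mem hp (hGL hgG), ?_⟩
      have : (p - g).2 = p.2 - g.2 := rfl
      rw [this, ← dist_eq_norm]
      exact hdist
    have hcalc : p = (p - g) + g := by abel
    rw [hcalc]
    exact V.add_mem (Submodule.subset_span hpg) (hGV hgG)
  -- the span of A is everything
  have hspanL : Submodule.span ℝ (L : Set (EuclideanSpace ℝ (Fin d) × EuclideanSpace ℝ (Fin m))) = ⊤ := span_eq_top_of_cocompact L K hKc hKcov
  have hVtop : V = ⊤ := by
    rw [eq_top_iff, ← hspanL]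
    exact Submodule.span_le.mpr hLV
  -- extract a basis from A
  obtain ⟨s0, hs0A, hs0span, hs0li⟩ := exists_linearIndependent ℝ A
  have hs0span' : Submodule.span ℝ s0 = ⊤ := by rw [hs0span, ← hV, hVtop]
  have hfin : s0.Finite := hs0li.setFinite
  haveI : Fintype s0 := hfin.fintype
  let b : Module.Basis s0 ℝ (EuclideanSpace ℝ (Fin d) × EuclideanSpace ℝ (Fin m)) := Module.Basis.mk hs0li (by rw [Subtype.range_coe_subtype, Set.setOf_mem_eq, hs0span'])
  have hEdim : Module.finrank ℝ (EuclideanSpace ℝ (Fin d) × EuclideanSpace ℝ (Fin m)) = d + m := by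
    rw [Module.finrank_prod, finrank_euclideanSpace, finrank_euclideanSpace]
    simp
  have hcard : Fintype.card s0 = d + m := by
    rw [← Module.finrank_eq_card_basis b, hEdim]
  let e : s0 ≃ Fin (d + m) := Fintype.equivFinOfCardEq hcard
  let b' : Module.Basis (Fin (d + m)) ℝ (EuclideanSpace ℝ (Fin d) × EuclideanSpace ℝ (Fin m)) := b.reindex e
  have hb'A : ∀ i, (b' i : (EuclideanSpace ℝ (Fin d) × EuclideanSpace ℝ (Fin m))) ∈ A := by
    intro i
    have : b' i = ((e.symm i : s0) : (EuclideanSpace ℝ (Fin d) × EuclideanSpace ℝ (Fin m))) := by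
      rw [Module.Basis.reindex_apply, Module.Basis.mk_apply]
    rw [this]
    exact hs0A (e.symm i).2
  have hqL : ∀ i, b' i ∈ L := fun i => (hb'A i).1
  have hq2 : ∀ i, ‖(b' i).2‖ < δ := fun i => (hb'A i).2
  -- the radius
  set M : ℝ := ∑ i, ‖b' i‖ with hM
  have hM0 : 0 ≤ M := Finset.sum_nonneg fun i _ => norm_nonneg _
  refine ⟨(N + 1) * M + 1, by positivity, ?_⟩
  intro y
  obtain ⟨x, hx⟩ : ∃ x : (EuclideanSpace ℝ (Fin d) × EuclideanSpace ℝ (Fin m)),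
      x = (y, w₀) := ⟨_, rfl⟩
  obtain ⟨α, hα⟩ : ∃ α : Fin (d + m) → ℝ, α = fun i => b'.repr x i := ⟨_, rfl⟩
  obtain ⟨ℓ, hℓ⟩ : ∃ ℓ : (EuclideanSpace ℝ (Fin d) × EuclideanSpace ℝ (Fin m)),
      ℓ = ∑ i, (⌊α i⌋ : ℝ) • b' i := ⟨_, rfl⟩
  have hℓL : ℓ ∈ L := by
    rw [hℓ]
    refine AddSubgroup.sum_mem L fun i _ => ?_
    rw [Int.cast_smul_eq_zsmul]
    exact AddSubgroup.zsmul_mem L (hqL i) _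
  have hxsum : ∑ i, α i • b' i = x := by rw [hα]; exact b'.sum_repr x
  have hxl : x - ℓ = ∑ i, Int.fract (α i) • b' i := by
    rw [hℓ, ← hxsum, ← Finset.sum_sub_distrib]
    refine Finset.sum_congr rfl fun i _ => ?_
    rw [← sub_smul, Int.self_sub_floor]
  -- norm bounds on fractional parts
  have hfr1 : ∀ i : Fin (d + m), ‖Int.fract (α i) • b' i‖ ≤ ‖b' i‖ := by
    intro i
    rw [norm_smul, Real.norm_eq_abs, abs_of_nonneg (Int.fract_nonneg _)]
    exact mul_le_of_le_one_left (norm_nonneg _) (Int.fract_lt_one _).le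
  have hxlnorm : ‖x - ℓ‖ ≤ M := by
    rw [hxl, hM]
    exact le_trans (norm_sum_le _ _) (Finset.sum_le_sum fun i _ => hfr1 i)
  -- second-coordinate bound for ℓ
  have hsnd : (x - ℓ).2 = ∑ i, Int.fract (α i) • (b' i).2 := by
    rw [hxl, Prod.snd_sum]
    simp only [Prod.smul_snd]
  have hℓ2 : ‖x.2 - ℓ.2‖ ≤ (d + m) * δ := by
    have h1 : ‖(x - ℓ).2‖ ≤ ∑ i : Fin (d + m), δ := by
      rw [hsnd]
      refine le_trans (norm_sum_le _ _) (Finset.sum_le_sum fun i _ => ?_)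
      rw [norm_smul, Real.norm_eq_abs, abs_of_nonneg (Int.fract_nonneg _)]
      calc Int.fract (α i) * ‖(b' i).2‖ ≤ 1 * δ :=
            mul_le_mul (Int.fract_lt_one _).le (hq2 i).le (norm_nonneg _) zero_le_one
        _ = δ := one_mul δ
    simpa using h1
  -- the progression
  refine ⟨ℓ.1, fun i => (b' i).1, ?_, ?_⟩
  · -- linear independence over ℤ
    rw [linearIndependent_iff']
    intro t g hsum i hi
    have hmem : (∑ j ∈ t, g j • b' j) ∈ L :=
      AddSubgroup.sum_mem L fun j _ => AddSubgroup.zsmul_mem L (hqL j) _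
    have h1 : (∑ j ∈ t, g j • b' j).1 = 0 := by
      rw [Prod.fst_sum]
      simpa using hsum
    have h0 : (∑ j ∈ t, g j • b' j) = 0 := by
      have := hinj _ hmem 0 L.zero_mem (by simpa using h1)
      simpa using this
    have hliℝ := b'.linearIndependent
    rw [linearIndependent_iff'] at hliℝ
    have h2 : ∑ j ∈ t, ((g j : ℝ)) • b' j = 0 := by
      rw [← h0]
      exact Finset.sum_congr rfl fun j _ => Int.cast_smul_eq_zsmul ℝ (g j) (b' j)
    exact_mod_cast hliℝ t (fun j => (g j : ℝ)) h2 i hi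
  · intro c hc
    obtain ⟨p, hp⟩ : ∃ p : (EuclideanSpace ℝ (Fin d) × EuclideanSpace ℝ (Fin m)),
        p = ℓ + ∑ i, (c i : ℝ) • b' i := ⟨_, rfl⟩
    have hpL : p ∈ L := by
      rw [hp]
      refine AddSubgroup.add_mem L hℓL (AddSubgroup.sum_mem L fun i _ => ?_)
      rw [Nat.cast_smul_eq_nsmul]
      exact AddSubgroup.nsmul_mem L (hqL i) _
    have hp1 : p.1 = ℓ.1 + ∑ i, (c i : ℝ) • (b' i).1 := by
      rw [hp, Prod.fst_add, Prod.fst_sum]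
      simp only [Prod.smul_fst]
    have hcsum : ∀ i : Fin (d + m), ‖(c i : ℝ) • (b' i).2‖ ≤ N * δ := by
      intro i
      rw [norm_smul, Real.norm_natCast]
      have h1 : (c i : ℝ) ≤ N := Nat.cast_le.mpr (hc i)
      exact mul_le_mul h1 (hq2 i).le (norm_nonneg _) (Nat.cast_nonneg N)
    -- second coordinate is in the window
    have hp2W : p.2 ∈ W := by
      apply hballW
      rw [Metric.mem_ball, dist_eq_norm]
      have hsplit : p.2 - w₀ = (ℓ.2 - x.2) + ∑ i, (c i : ℝ) • (b' i).2 := by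
        have h2 : p.2 = ℓ.2 + ∑ i, (c i : ℝ) • (b' i).2 := by
          rw [hp, Prod.snd_add, Prod.snd_sum]
          simp only [Prod.smul_snd]
        have hx2 : x.2 = w₀ := by rw [hx]
        rw [h2, hx2]
        abel
      have h1 : δ * ((((d + m) * (N + 1) : ℕ) : ℝ) + 1) = ε := by
        rw [hδdef]
        have hne : ((((d + m) * (N + 1) + 1 : ℕ)) : ℝ) ≠ 0 := by positivity
        push_cast at hne ⊢
        field_simp
      have hkey : ((((d + m) * (N + 1) : ℕ)) : ℝ) * δ < ε := by
        rw [← h1, mul_comm]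
        exact (mul_lt_mul_iff_right₀ hδ).mpr (lt_add_one _)
      calc ‖p.2 - w₀‖ ≤ ‖ℓ.2 - x.2‖ + ‖∑ i, (c i : ℝ) • (b' i).2‖ := by
            rw [hsplit]; exact norm_add_le _ _
        _ ≤ (d + m) * δ + (d + m) * (N * δ) := by
            refine add_le_add ?_ ?_
            · rw [norm_sub_rev]; exact hℓ2
            · refine le_trans (norm_sum_le _ _) ?_
              have := Finset.sum_le_sum (fun i (_ : i ∈ Finset.univ) => hcsum i)
              simpa [mul_comm] using this
        _ < ε := by
            have h2 : ((d : ℝ) + m) * δ + ((d : ℝ) + m) * (N * δ)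
                = ((((d + m) * (N + 1) : ℕ)) : ℝ) * δ := by
              push_cast
              ring
            calc ((d : ℝ) + m) * δ + ((d : ℝ) + m) * (N * δ)
                = ((((d + m) * (N + 1) : ℕ)) : ℝ) * δ := h2
              _ < ε := hkey
    constructor
    · exact ⟨p.2, hp2W, by rw [← hp1]; simpa using hpL⟩
    · -- in the ball
      rw [Metric.mem_ball, dist_eq_norm]
      have heq : p.1 - y = (p - x).1 := by
        rw [hx, Prod.fst_sub]
      rw [← hp1, heq]
      have hsplit : p - x = (ℓ - x) + ∑ i, (c i : ℝ) • b' i := by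
        rw [hp]; abel
      have hcnorm : ∀ i : Fin (d + m), ‖(c i : ℝ) • b' i‖ ≤ N * ‖b' i‖ := by
        intro i
        rw [norm_smul, Real.norm_natCast]
        exact mul_le_mul_of_nonneg_right (Nat.cast_le.mpr (hc i)) (norm_nonneg _)
      calc ‖(p - x).1‖ ≤ ‖p - x‖ := norm_fst_le _
        _ ≤ ‖ℓ - x‖ + ‖∑ i, (c i : ℝ) • b' i‖ := by rw [hsplit]; exact norm_add_le _ _
        _ ≤ M + N * M := by
            refine add_le_add ?_ ?_
            · rw [norm_sub_rev]; exact hxlnorm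
            · refine le_trans (norm_sum_le _ _) ?_
              rw [hM, Finset.mul_sum]
              exact Finset.sum_le_sum fun i _ => hcnorm i
        _ < (N + 1) * M + 1 := by
            have : ((N : ℝ) + 1) * M = N * M + M := by ring
            linarith
end

section
/- Let (ℝ^d, ℝ^m, ℒ) be a fully Euclidean cut-and-project scheme and let W ⊆ ℝ^m be precompact with nonempty interior. Then for every r, k ∈ ℕ there exists R > 0 such that for every colouring of Λ(W) with r colours and every y ∈ ℝ^d, the set Λ(W) ∩ B_R(y) contains a monochromatic li-arithmetic progression of length k and rank d + m; that is, there exist s ∈ ℝ^d and r₁, …, r_{d+m} ∈ ℝ^d linearly independent over ℤ such that all points s + ∑_{i=1}^{d+m} cᵢrᵢ for integers 0 ≤ cᵢ ≤ k lie in Λ(W) ∩ B_R(y) and receive the same colour. -/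
open Filter

section Gallai

/-- Finitary Gallai theorem, deduced from mathlib's `Combinatorics.exists_mono_homothetic_copy`
by an ultrafilter compactness argument. -/
theorem gallai_finitary (n r k : ℕ) :
    ∃ M : ℕ, ∀ C : (Fin n → ℕ) → Fin r,
      ∃ a : ℕ, 0 < a ∧ ∃ b : Fin n → ℕ, ∃ col : Fin r,
        (∀ i, a * k + b i ≤ M) ∧
        ∀ c : Fin n → ℕ, (∀ i, c i ≤ k) →
          C (fun i => a * c i + b i) = col := by
  by_contra h
  push_neg at h
  choose C hC using h
  let U : Ultrafilter ℕ := Ultrafilter.of atTop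
  have hU : (U : Filter ℕ) ≤ atTop := Ultrafilter.of_le _
  have hlim : ∀ x : Fin n → ℕ, ∃ v : Fin r, {M | C M x = v} ∈ U := by
    intro x
    obtain ⟨v, hv⟩ := Ultrafilter.eq_pure_of_finite (U.map (fun M => C M x))
    refine ⟨v, ?_⟩
    have : {v} ∈ U.map (fun M => C M x) := by
      rw [hv]; exact Filter.mem_pure.2 rfl
    simpa [Ultrafilter.mem_map, Set.preimage, Set.mem_singleton_iff] using this
  choose Cinf hCinf using hlim
  obtain ⟨a, ha, b, col, hmono⟩ :=
    Combinatorics.exists_mono_homothetic_copy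
      (Fintype.piFinset (fun _ : Fin n => Finset.range (k + 1))) Cinf
  let S : Finset (Fin n → ℕ) := Fintype.piFinset (fun _ : Fin n => Finset.range (k + 1))
  have hmem : {M : ℕ | ∀ s ∈ S, C M (a • s + b) = col} ∈ U := by
    have : {M : ℕ | ∀ s ∈ S, C M (a • s + b) = col} =
        ⋂ s ∈ (S : Set (Fin n → ℕ)), {M | C M (a • s + b) = col} := by
      ext M; simp
    rw [this]
    refine (Filter.biInter_mem S.finite_toSet).2 ?_
    intro s hs
    have := hCinf (a • s + b)
    rwa [hmono s hs] at this
  have hbig : {M : ℕ | ∀ i, a * k + b i ≤ M} ∈ U := by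
    apply hU
    refine Filter.eventually_atTop.2 ⟨a * k + (Finset.univ.sup b), fun M hM i => ?_⟩
    exact le_trans (by gcongr; exact Finset.le_sup (Finset.mem_univ i)) hM
  obtain ⟨M, hM1, hM2⟩ : ∃ M, (∀ s ∈ S, C M (a • s + b) = col) ∧ (∀ i, a * k + b i ≤ M) :=
    Ultrafilter.nonempty_of_mem (U.inter_mem hmem hbig) |>.imp (fun M hM => hM)
  obtain ⟨c, hc, hne⟩ := hC M a ha b col hM2
  apply hne
  have hcs : c ∈ S := by
    simp only [S, Fintype.mem_piFinset, Finset.mem_range]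
    exact fun i => Nat.lt_succ_of_le (hc i)
  have heq : (fun i => a * c i + b i) = a • c + b := by
    ext i; simp [Pi.smul_apply, Pi.add_apply]
  rw [heq]; exact hM1 c hcs

end Gallai

section Aux

variable {E₁ E₂ : Type*} [NormedAddCommGroup E₁] [NormedSpace ℝ E₁]
  [NormedAddCommGroup E₂] [NormedSpace ℝ E₂]

/-- A cocompact subgroup of a finite-dimensional real normed space spans it. -/
lemma span_of_lattice {E : Type*} [NormedAddCommGroup E] [NormedSpace ℝ E]
    [FiniteDimensional ℝ E] (L : AddSubgroup E) {K : Set E} (hK : IsCompact K)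
    (hrep : ∀ x : E, ∃ l ∈ L, x - l ∈ K) :
    Submodule.span ℝ (L : Set E) = ⊤ := by
  obtain ⟨C, hC⟩ := hK.isBounded.subset_closedBall 0
  refine eq_top_iff.2 fun x _ => ?_
  have hcl : IsClosed ((Submodule.span ℝ (L : Set E)) : Set E) :=
    (Submodule.span ℝ (L : Set E)).closed_of_finiteDimensional
  have hx : x ∈ closure ((Submodule.span ℝ (L : Set E)) : Set E) := by
    rw [Metric.mem_closure_iff]
    intro ε hε
    obtain ⟨N, hN⟩ := exists_nat_gt (C / ε)
    have hN1 : (0:ℝ) < (N:ℝ) + 1 := by positivity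
    obtain ⟨l, hl, hlK⟩ := hrep (((N:ℝ) + 1) • x)
    have hnorm : ‖((N:ℝ) + 1) • x - l‖ ≤ C := by
      have := hC hlK
      simpa [Metric.mem_closedBall, dist_eq_norm] using this
    refine ⟨((N:ℝ)+1)⁻¹ • l, Submodule.smul_mem _ _ (Submodule.subset_span hl), ?_⟩
    rw [dist_eq_norm]
    have hxl : x - ((N:ℝ)+1)⁻¹ • l = ((N:ℝ)+1)⁻¹ • (((N:ℝ)+1) • x - l) := by
      rw [smul_sub, inv_smul_smul₀ (ne_of_gt hN1)]
    rw [hxl, norm_smul]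
    have h1 : ‖((N:ℝ)+1)⁻¹‖ = ((N:ℝ)+1)⁻¹ := by
      rw [Real.norm_eq_abs, abs_of_pos (by positivity)]
    rw [h1]
    have hCN : C < ((N:ℝ)+1) * ε := by
      have : C / ε < (N:ℝ) + 1 := hN.trans (by linarith)
      calc C = (C / ε) * ε := by field_simp
        _ < ((N:ℝ)+1) * ε := by exact mul_lt_mul_of_pos_right this hε
    calc ((N:ℝ)+1)⁻¹ * ‖((N:ℝ) + 1) • x - l‖ ≤ ((N:ℝ)+1)⁻¹ * C := by
          exact mul_le_mul_of_nonneg_left hnorm (by positivity)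
      _ < ε := by
          rw [inv_mul_lt_iff₀ hN1]; linarith
  rwa [hcl.closure_eq] at hx

/-- Every lattice point lies in the real span of the lattice points with small
second coordinate. -/
lemma mem_span_small (L : AddSubgroup (E₁ × E₂))
    (hden : Dense (Prod.snd '' (L : Set (E₁ × E₂)))) {δ : ℝ} (hδ : 0 < δ)
    {l : E₁ × E₂} (hl : l ∈ L) :
    l ∈ Submodule.span ℝ {x : E₁ × E₂ | x ∈ L ∧ ‖x.2‖ < δ} := by
  obtain ⟨N, hN⟩ := exists_nat_gt (‖l.2‖ / (δ/2))
  have hNr : (0:ℝ) < (N:ℝ) + 1 := by positivity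
  have hNr1 : (1:ℝ) ≤ (N:ℝ) + 1 := le_add_of_nonneg_left (Nat.cast_nonneg N)
  have hl2 : ‖l.2‖ < ((N:ℝ)+1) * (δ/2) := by
    have h1 : ‖l.2‖ / (δ/2) < (N:ℝ) + 1 := hN.trans (by linarith)
    calc ‖l.2‖ = (‖l.2‖ / (δ/2)) * (δ/2) := by field_simp
      _ < ((N:ℝ)+1) * (δ/2) := mul_lt_mul_of_pos_right h1 (by positivity)
  obtain ⟨z, hz, hdist⟩ := hden.exists_dist_lt ((((N:ℝ)+1)⁻¹) • l.2)
    (show 0 < δ/(2*((N:ℝ)+1)) by positivity)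
  obtain ⟨g, hgL, hgz⟩ := hz
  have hdist' : ‖(((N:ℝ)+1)⁻¹) • l.2 - g.2‖ < δ/(2*((N:ℝ)+1)) := by
    rw [← dist_eq_norm, hgz]; exact hdist
  have hg2 : ‖g.2‖ < δ := by
    have h1 : ‖g.2‖ ≤ ‖(((N:ℝ)+1)⁻¹) • l.2‖ + ‖(((N:ℝ)+1)⁻¹) • l.2 - g.2‖ := by
      have h := norm_le_insert' g.2 ((((N:ℝ)+1)⁻¹) • l.2)
      rwa [norm_sub_rev g.2] at h
    have h2 : ‖(((N:ℝ)+1)⁻¹) • l.2‖ < δ/2 := by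
      rw [norm_smul, Real.norm_eq_abs, abs_of_pos (by positivity)]
      rw [inv_mul_lt_iff₀ hNr]
      calc ‖l.2‖ < ((N:ℝ)+1) * (δ/2) := hl2
        _ = ((N:ℝ)+1) * (δ/2) := rfl
    have h3 : δ/(2*((N:ℝ)+1)) ≤ δ/2 := by
      apply div_le_div_of_nonneg_left (le_of_lt hδ) (by positivity)
      nlinarith
    linarith
  -- the correction term
  have hkey : ‖l.2 - ((N:ℝ)+1) • g.2‖ < δ := by
    have : l.2 - ((N:ℝ)+1) • g.2 = ((N:ℝ)+1) • ((((N:ℝ)+1)⁻¹) • l.2 - g.2) := by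
      rw [smul_sub, smul_inv_smul₀ (ne_of_gt hNr)]
    rw [this, norm_smul, Real.norm_eq_abs, abs_of_pos hNr]
    calc ((N:ℝ)+1) * ‖(((N:ℝ)+1)⁻¹) • l.2 - g.2‖
        < ((N:ℝ)+1) * (δ/(2*((N:ℝ)+1))) := by
          exact mul_lt_mul_of_pos_left hdist' hNr
      _ = δ/2 := by field_simp
      _ < δ := by linarith
  -- conclude
  set t : Set (E₁ × E₂) := {x | x ∈ L ∧ ‖x.2‖ < δ}
  have hgmem : g ∈ t := ⟨hgL, hg2⟩
  have hNsmul : ((N+1 : ℕ) • g : E₁ × E₂) = ((N:ℝ)+1) • g := by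
    rw [← Nat.cast_smul_eq_nsmul ℝ]; push_cast; ring_nf
  have hsub : l - (N+1 : ℕ) • g ∈ t := by
    constructor
    · exact AddSubgroup.sub_mem L hl (AddSubgroup.nsmul_mem L hgL _)
    · have : (l - (N+1 : ℕ) • g).2 = l.2 - ((N:ℝ)+1) • g.2 := by
        rw [hNsmul]; simp [Prod.snd_sub]
      rw [this]; exact hkey
  have : l = (l - (N+1 : ℕ) • g) + ((N:ℝ)+1) • g := by
    rw [← hNsmul]; abel
  rw [this]
  exact Submodule.add_mem _ (Submodule.subset_span hsub)
    (Submodule.smul_mem _ _ (Submodule.subset_span hgmem))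

/-- From a cut-and-project scheme one can extract `n = dim` linearly independent lattice
vectors with arbitrarily small second coordinate. -/
lemma exists_small_li [FiniteDimensional ℝ E₁] [FiniteDimensional ℝ E₂]
    (L : AddSubgroup (E₁ × E₂))
    {K : Set (E₁ × E₂)} (hK : IsCompact K) (hrep : ∀ x, ∃ l ∈ L, x - l ∈ K)
    (hden : Dense (Prod.snd '' (L : Set (E₁ × E₂)))) {δ : ℝ} (hδ : 0 < δ)
    {n : ℕ} (hn : Module.finrank ℝ (E₁ × E₂) = n) :
    ∃ p : Fin n → E₁ × E₂, (∀ i, p i ∈ L) ∧ (∀ i, ‖(p i).2‖ < δ) ∧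
      LinearIndependent ℝ p := by
  classical
  set t : Set (E₁ × E₂) := {x | x ∈ L ∧ ‖x.2‖ < δ} with ht
  have hspan : Submodule.span ℝ t = ⊤ := by
    rw [eq_top_iff, ← span_of_lattice L hK hrep]
    exact Submodule.span_le.2 fun l hl => mem_span_small L hden hδ hl
  obtain ⟨b, hbt, hbs, hbi⟩ := exists_linearIndependent ℝ t
  rw [hspan] at hbs
  have hfin : b.Finite := hbi.setFinite
  haveI := hfin.fintype
  have hbasis : Module.Basis b ℝ (E₁ × E₂) :=
    Module.Basis.mk hbi (by rw [Subtype.range_coe, hbs])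
  have hcard : Fintype.card b = n := by
    rw [← Module.finrank_eq_card_basis hbasis, hn]
  let e : Fin n ≃ b := (Fintype.equivFinOfCardEq hcard).symm
  refine ⟨fun i => ((e i : E₁ × E₂)), fun i => (hbt (e i).2).1,
    fun i => (hbt (e i).2).2, ?_⟩
  exact hbi.comp e e.injective

/-- Uniform relative denseness: there is a constant `C` such that near every `y`
(within distance `C`) there is a lattice point whose second coordinate is `ε`-close
to `w0`. -/
lemma exists_uniform_near [FiniteDimensional ℝ E₂] (L : AddSubgroup (E₁ × E₂))
    {K : Set (E₁ × E₂)} (hK : IsCompact K) (hrep : ∀ x, ∃ l ∈ L, x - l ∈ K)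
    (hden : Dense (Prod.snd '' (L : Set (E₁ × E₂)))) (w0 : E₂) {ε : ℝ} (hε : 0 < ε) :
    ∃ C : ℝ, 0 ≤ C ∧ ∀ y : E₁, ∃ l ∈ L, ‖l.2 - w0‖ < ε ∧ ‖l.1 - y‖ ≤ C := by
  classical
  obtain ⟨C1, hC1⟩ := hK.isBounded.subset_closedBall 0
  set C1' := max C1 0 with hC1'def
  have hC1'0 : 0 ≤ C1' := le_max_right _ _
  have hKball : K ⊆ Metric.closedBall 0 C1' :=
    hC1.trans (Metric.closedBall_subset_closedBall (le_max_left _ _))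
  set T := Metric.closedBall (0 : E₂) C1' with hTdef
  have hTc : IsCompact T := isCompact_closedBall _ _
  have hcover : T ⊆ ⋃ z ∈ Prod.snd '' (L : Set (E₁ × E₂)), Metric.ball z (ε/2) := by
    intro x _
    obtain ⟨z, hz, hd⟩ := hden.exists_dist_lt x (half_pos hε)
    exact Set.mem_biUnion hz (by simpa [Metric.mem_ball] using hd)
  obtain ⟨F, hFsub, hFfin, hFcov⟩ :=
    hTc.elim_finite_subcover_image (fun z _ => Metric.isOpen_ball) hcover
  have hchoose : ∀ z ∈ F, ∃ u : E₁ × E₂, u ∈ L ∧ u.2 = z := by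
    intro z hz
    obtain ⟨u, huL, hu2⟩ := hFsub hz
    exact ⟨u, huL, hu2⟩
  choose! u huL hu2 using hchoose
  set C2 : ℝ := ∑ z ∈ hFfin.toFinset, ‖u z‖ with hC2def
  have hC2nn : 0 ≤ C2 := Finset.sum_nonneg fun _ _ => norm_nonneg _
  refine ⟨C1' + C2, by linarith, fun y => ?_⟩
  obtain ⟨l, hlL, hlK⟩ := hrep (y, w0)
  have hKnorm : ‖(y, w0) - l‖ ≤ C1' := by
    have := hKball hlK
    simpa [Metric.mem_closedBall, dist_eq_norm] using this
  have hl2 : ‖w0 - l.2‖ ≤ C1' := by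
    have h := norm_snd_le ((y, w0) - l)
    simp only [Prod.snd_sub] at h
    exact le_trans h hKnorm
  have hl1 : ‖y - l.1‖ ≤ C1' := by
    have h := norm_fst_le ((y, w0) - l)
    simp only [Prod.fst_sub] at h
    exact le_trans h hKnorm
  have htT : w0 - l.2 ∈ T := by
    rw [hTdef, Metric.mem_closedBall, dist_zero_right]; exact hl2
  obtain ⟨z, hzF, hzmem⟩ := Set.mem_iUnion₂.1 (hFcov htT)
  have hball : dist (w0 - l.2) z < ε/2 := Metric.mem_ball.1 hzmem
  refine ⟨l + u z, AddSubgroup.add_mem L hlL (huL z hzF), ?_, ?_⟩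
  · have heq : (l + u z).2 - w0 = z - (w0 - l.2) := by
      have := hu2 z hzF
      simp only [Prod.snd_add, this]; abel
    rw [heq]
    calc ‖z - (w0 - l.2)‖ = dist (w0 - l.2) z := by rw [dist_eq_norm, norm_sub_rev]
      _ < ε/2 := hball
      _ < ε := by linarith
  · have heq : (l + u z).1 - y = (l.1 - y) + (u z).1 := by
      simp only [Prod.fst_add]; abel
    rw [heq]
    have h1 : ‖l.1 - y‖ ≤ C1' := by rw [norm_sub_rev]; exact hl1
    have h2 : ‖(u z).1‖ ≤ C2 := by
      calc ‖(u z).1‖ ≤ ‖u z‖ := norm_fst_le _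
        _ ≤ C2 := Finset.single_le_sum (f := fun z => ‖u z‖)
            (fun _ _ => norm_nonneg _) (hFfin.mem_toFinset.2 hzF)
    calc ‖(l.1 - y) + (u z).1‖ ≤ ‖l.1 - y‖ + ‖(u z).1‖ := norm_add_le _ _
      _ ≤ C1' + C2 := add_le_add h1 h2

end Aux

/-- colouring version for fully Euclidean model sets: for every
`r, k ∈ ℕ` there is `R > 0` such that for every colouring of `Λ(W)` with `r` colours
and every `y ∈ ℝ^d`, the set `Λ(W) ∩ B_R(y)` contains a monochromatic li-arithmetic
progression of length `k` and rank `d + m`. -/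
theorem stmt_10 {d m : ℕ}
    (L : AddSubgroup (EuclideanSpace ℝ (Fin d) × EuclideanSpace ℝ (Fin m)))
    (hL : IsCPS d m L) (W : Set (EuclideanSpace ℝ (Fin m)))
    (hWc : IsCompact (closure W)) (hWi : (interior W).Nonempty) (r k : ℕ) :
    ∃ R > (0 : ℝ), ∀ χ : EuclideanSpace ℝ (Fin d) → Fin r,
      ∀ y : EuclideanSpace ℝ (Fin d),
      ∃ (s : EuclideanSpace ℝ (Fin d)) (v : Fin (d + m) → EuclideanSpace ℝ (Fin d)),
        LinearIndependent ℤ v ∧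
        (∀ c : Fin (d + m) → ℕ, (∀ i, c i ≤ k) →
          s + ∑ i, (c i : ℝ) • v i ∈ cutProject L W ∩ Metric.ball y R) ∧
        ∃ col : Fin r, ∀ c : Fin (d + m) → ℕ, (∀ i, c i ≤ k) →
          χ (s + ∑ i, (c i : ℝ) • v i) = col := by
  classical
  obtain ⟨⟨_, K, hK, hrep⟩, hinj, hden⟩ := hL
  obtain ⟨w0, hw0⟩ := hWi
  obtain ⟨ε, hε, hballW⟩ : ∃ ε > 0, Metric.ball w0 ε ⊆ W := by
    obtain ⟨ε, hε, h⟩ := Metric.isOpen_iff.1 isOpen_interior w0 hw0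
    exact ⟨ε, hε, h.trans interior_subset⟩
  obtain ⟨M, hM⟩ := gallai_finitary (d + m) r k
  have hfr : Module.finrank ℝ (EuclideanSpace ℝ (Fin d) × EuclideanSpace ℝ (Fin m)) = d + m := by
    rw [Module.finrank_prod, finrank_euclideanSpace_fin, finrank_euclideanSpace_fin]
  set D : ℝ := ((d + m) * M : ℕ) + 1 with hDdef
  have hD0 : (0:ℝ) < D := by positivity
  set δ : ℝ := ε / (2 * D) with hδdef
  have hδ : 0 < δ := by positivity
  obtain ⟨p, hpL, hpδ, hpli⟩ := exists_small_li L hK hrep hden hδ hfr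
  obtain ⟨C0, hC0n, hC0⟩ := exists_uniform_near L hK hrep hden w0 (half_pos hε)
  set B : ℝ := ∑ i : Fin (d + m), ‖(p i).1‖ with hBdef
  have hBn : 0 ≤ B := Finset.sum_nonneg fun _ _ => norm_nonneg _
  refine ⟨C0 + M * B + 1, by positivity, fun χ y => ?_⟩
  obtain ⟨s0, hs0L, hs0w, hs0y⟩ := hC0 y
  -- the lattice points associated to integer vectors
  set Q : (Fin (d + m) → ℕ) → EuclideanSpace ℝ (Fin d) × EuclideanSpace ℝ (Fin m) :=
    fun c => s0 + ∑ i, (c i : ℝ) • p i with hQdef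
  have hQL : ∀ c, Q c ∈ L := by
    intro c
    refine AddSubgroup.add_mem L hs0L (AddSubgroup.sum_mem L fun i _ => ?_)
    rw [Nat.cast_smul_eq_nsmul]
    exact AddSubgroup.nsmul_mem L (hpL i) _
  have hQ1 : ∀ c, (Q c).1 = s0.1 + ∑ i, (c i : ℝ) • (p i).1 := by
    intro c
    simp [hQdef, Prod.fst_add, Prod.fst_sum]
  have hQ2 : ∀ c, (Q c).2 = s0.2 + ∑ i, (c i : ℝ) • (p i).2 := by
    intro c
    simp [hQdef, Prod.snd_add, Prod.snd_sum]
  -- apply finitary Gallai to the induced colouring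
  obtain ⟨a, ha, b, col, hbound, hmono⟩ := hM (fun c => χ ((Q c).1))
  -- bounds on Q c for admissible c
  have hQwin : ∀ c : Fin (d + m) → ℕ, (∀ i, c i ≤ M) → (Q c).1 ∈ cutProject L W := by
    intro c hc
    have hsum : ‖∑ i, (c i : ℝ) • (p i).2‖ ≤ ((d + m) * M : ℕ) * δ := by
      calc ‖∑ i, (c i : ℝ) • (p i).2‖ ≤ ∑ i, ‖(c i : ℝ) • (p i).2‖ :=
            norm_sum_le _ _
        _ ≤ ∑ _i : Fin (d + m), (M : ℝ) * δ := by
            refine Finset.sum_le_sum fun i _ => ?_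
            rw [norm_smul, Real.norm_eq_abs, abs_of_nonneg (Nat.cast_nonneg _)]
            exact mul_le_mul (by exact_mod_cast hc i) (le_of_lt (hpδ i))
              (norm_nonneg _) (Nat.cast_nonneg _)
        _ = ((d + m) : ℝ) * ((M : ℝ) * δ) := by
            rw [Finset.sum_const, Finset.card_univ, Fintype.card_fin, nsmul_eq_mul]
            push_cast; ring
        _ = ((d + m) * M : ℕ) * δ := by push_cast; ring
    have hwin : (Q c).2 ∈ Metric.ball w0 ε := by
      rw [Metric.mem_ball, dist_eq_norm, hQ2]
      have hDδ : (((d + m) * M : ℕ) : ℝ) * δ < ε / 2 := by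
        rw [hδdef]
        have hlt : (((d + m) * M : ℕ) : ℝ) < D := by rw [hDdef]; linarith
        calc (((d + m) * M : ℕ) : ℝ) * (ε / (2 * D)) < D * (ε / (2 * D)) := by
              exact mul_lt_mul_of_pos_right hlt (by positivity)
          _ = ε / 2 := by field_simp
      calc ‖s0.2 + ∑ i, (c i : ℝ) • (p i).2 - w0‖
          ≤ ‖s0.2 - w0‖ + ‖∑ i, (c i : ℝ) • (p i).2‖ := by
            have : s0.2 + ∑ i, (c i : ℝ) • (p i).2 - w0
                = (s0.2 - w0) + ∑ i, (c i : ℝ) • (p i).2 := by abel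
            rw [this]; exact norm_add_le _ _
        _ < ε / 2 + ε / 2 := by
            have := lt_of_le_of_lt hsum hDδ
            exact add_lt_add hs0w this
        _ = ε := by ring
    exact ⟨(Q c).2, hballW hwin, by simpa using hQL c⟩
  have hQball : ∀ c : Fin (d + m) → ℕ, (∀ i, c i ≤ M) →
      (Q c).1 ∈ Metric.ball y (C0 + M * B + 1) := by
    intro c hc
    rw [Metric.mem_ball, dist_eq_norm, hQ1]
    have hsum : ‖∑ i, (c i : ℝ) • (p i).1‖ ≤ M * B := by
      calc ‖∑ i, (c i : ℝ) • (p i).1‖ ≤ ∑ i, ‖(c i : ℝ) • (p i).1‖ := norm_sum_le _ _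
        _ ≤ ∑ i, (M : ℝ) * ‖(p i).1‖ := by
            refine Finset.sum_le_sum fun i _ => ?_
            rw [norm_smul, Real.norm_eq_abs, abs_of_nonneg (Nat.cast_nonneg _)]
            exact mul_le_mul_of_nonneg_right (by exact_mod_cast hc i) (norm_nonneg _)
        _ = M * B := by rw [hBdef, Finset.mul_sum]
    calc ‖s0.1 + ∑ i, (c i : ℝ) • (p i).1 - y‖
        ≤ ‖s0.1 - y‖ + ‖∑ i, (c i : ℝ) • (p i).1‖ := by
          have : s0.1 + ∑ i, (c i : ℝ) • (p i).1 - y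
              = (s0.1 - y) + ∑ i, (c i : ℝ) • (p i).1 := by abel
          rw [this]; exact norm_add_le _ _
      _ ≤ C0 + M * B := add_le_add hs0y hsum
      _ < C0 + M * B + 1 := by linarith
  -- the witnesses
  refine ⟨(Q b).1, fun i => (a : ℝ) • (p i).1, ?_, ?_, col, ?_⟩
  · -- linear independence over ℤ
    rw [linearIndependent_iff']
    intro s g hg i hi
    have haZ : ((a : ℤ)) ≠ 0 := by exact_mod_cast Nat.pos_iff_ne_zero.1 ha
    have hqL : (∑ j ∈ s, (g j * (a : ℤ)) • p j) ∈ L :=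
      AddSubgroup.sum_mem L fun j _ => AddSubgroup.zsmul_mem L (hpL j) _
    have hq1 : (∑ j ∈ s, (g j * (a : ℤ)) • p j).1 = ∑ j ∈ s, g j • ((a : ℝ) • (p j).1) := by
      rw [Prod.fst_sum]
      refine Finset.sum_congr rfl fun j _ => ?_
      rw [← Int.cast_smul_eq_zsmul ℝ (g j * (a : ℤ)) (p j), Prod.smul_fst,
        ← Int.cast_smul_eq_zsmul ℝ (g j) ((a : ℝ) • (p j).1), smul_smul]
      push_cast
      ring_nf
    have hzero : (∑ j ∈ s, (g j * (a : ℤ)) • p j) = 0 := by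
      refine hinj _ hqL 0 (AddSubgroup.zero_mem L) ?_
      rw [hq1, hg]; rfl
    have hreal : ∑ j ∈ s, ((g j * (a : ℤ) : ℤ) : ℝ) • p j = 0 := by
      rw [← hzero]
      exact Finset.sum_congr rfl fun j _ => Int.cast_smul_eq_zsmul ℝ _ _
    have := linearIndependent_iff'.1 hpli s (fun j => ((g j * (a : ℤ) : ℤ) : ℝ)) hreal i hi
    have hga : g i * (a : ℤ) = 0 := by
      have h0 : ((g i * (a : ℤ) : ℤ) : ℝ) = 0 := by simpa using this
      exact_mod_cast h0
    exact (mul_eq_zero.1 hga).resolve_right haZ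
  · -- membership
    intro c hc
    have hkey : (Q b).1 + ∑ i, (c i : ℝ) • ((a : ℝ) • (p i).1)
        = (Q (fun i => a * c i + b i)).1 := by
      rw [hQ1, hQ1]
      rw [add_assoc, ← Finset.sum_add_distrib]
      congr 1
      refine Finset.sum_congr rfl fun i _ => ?_
      rw [smul_smul]
      push_cast
      module
    rw [hkey]
    have hcM : ∀ i, a * c i + b i ≤ M := fun i =>
      le_trans (by have := hc i; have := hbound i; nlinarith [hc i]) (hbound i)
    exact ⟨hQwin _ hcM, hQball _ hcM⟩
  · -- monochromaticity
    intro c hc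
    have hkey : (Q b).1 + ∑ i, (c i : ℝ) • ((a : ℝ) • (p i).1)
        = (Q (fun i => a * c i + b i)).1 := by
      rw [hQ1, hQ1]
      rw [add_assoc, ← Finset.sum_add_distrib]
      congr 1
      refine Finset.sum_congr rfl fun i _ => ?_
      rw [smul_smul]
      push_cast
      module
    rw [hkey]
    exact hmono c hc
end

section
/- Let Λ, Γ ⊆ ℝ^d be Meyer sets which are equivalent by finite translations, i.e., there exists a finite set F ⊆ ℝ^d with Λ ⊆ Γ + F and Γ ⊆ Λ + F. Then for every k ∈ ℕ: Λ contains li-arithmetic progressions of rank k and every length N ∈ ℕ if and only if Γ contains li-arithmetic progressions of rank k and every length N ∈ ℕ. In particular, aprank(Λ) = aprank(Γ). -/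
open scoped Pointwise

/-- Key lemma (van der Waerden/Gallai argument): if `Λ ⊆ Γ + F` with `F` finite
and `Λ` has li-APs of rank `k` of every length, then so does `Γ`. -/
theorem hasLiAP_of_subset_add {d k : ℕ} (Λ Γ F : Set (EuclideanSpace ℝ (Fin d)))
    (hF : F.Finite) (h1 : Λ ⊆ Γ + F) (hAP : ∀ N : ℕ, HasLiAP Λ k N) :
    ∀ N : ℕ, HasLiAP Γ k N := by
  classical
  haveI hFfin : Fintype ↥F := hF.fintype
  haveI hOfin : Finite (Option ↥F) := Finite.of_fintype _
  choose s r hli hmem using hAP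
  -- grid point of the `M`-th AP
  set p : ℕ → (Fin k → ℕ) → EuclideanSpace ℝ (Fin d) := fun M c => s M + ∑ i, (c i : ℝ) • r M i with hp
  -- coloring of grid points by elements of `F` (when covered)
  set col : ℕ → (Fin k → ℕ) → Option ↥F := fun M c =>
    if h : ∃ f : ↥F, p M c - (f : EuclideanSpace ℝ (Fin d)) ∈ Γ then some h.choose else none with hcoldef
  set 𝒰 : Ultrafilter ℕ := Ultrafilter.of Filter.atTop with h𝒰
  have hC : ∀ c : Fin k → ℕ, ∃ y : Option ↥F, {M | col M c = y} ∈ 𝒰 := by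
    intro c
    have huniv : (⋃ y ∈ (Set.univ : Set (Option ↥F)), {M | col M c = y}) ∈ 𝒰 := by
      have : (⋃ y ∈ (Set.univ : Set (Option ↥F)), {M | col M c = y}) = Set.univ := by
        ext M; simp
      rw [this]; exact Filter.univ_mem
    rcases (Ultrafilter.finite_biUnion_mem_iff Set.finite_univ).mp huniv with ⟨y, -, hy⟩
    exact ⟨y, hy⟩
  choose C hCspec using hC
  intro N
  set S : Finset (Fin k → ℕ) := Fintype.piFinset fun _ : Fin k => Finset.range (N + 1)
    with hS
  obtain ⟨a, ha, b, y, hmono⟩ := Combinatorics.exists_mono_homothetic_copy S C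
  set B : ℕ := a * N + Finset.univ.sup b with hB
  -- pick a good index N' in the ultrafilter
  have hTmem : ({M | B ≤ M} ∩ ⋂ c ∈ (S : Set (Fin k → ℕ)),
      {M | col M (a • c + b) = C (a • c + b)}) ∈ 𝒰 := by
    refine Filter.inter_mem ?_ ?_
    · exact Ultrafilter.of_le Filter.atTop (Filter.mem_atTop B)
    · exact (Filter.biInter_mem S.finite_toSet).mpr fun c _ => hCspec (a • c + b)
  obtain ⟨N', hN'⟩ := Filter.nonempty_of_mem hTmem
  obtain ⟨hN'B, hN'col⟩ := hN'
  simp only [Set.mem_iInter, Finset.mem_coe, Set.mem_setOf_eq] at hN'col hN'B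
  -- grid points of the long AP (shifted by `b`, scaled by `a`) lie in `Γ + F`
  have hdef : ∀ c ∈ S, ∃ f : ↥F, p N' (a • c + b) - (f : EuclideanSpace ℝ (Fin d)) ∈ Γ := by
    intro c hc
    have hcle : ∀ i, c i ≤ N := by
      intro i
      have := (Fintype.mem_piFinset.mp hc) i
      simpa [Nat.lt_succ_iff] using this
    have hle : ∀ i, (a • c + b) i ≤ N' := by
      intro i
      have h1' : a * c i ≤ a * N := Nat.mul_le_mul_left a (hcle i)
      have h2' : b i ≤ Finset.univ.sup b := Finset.le_sup (Finset.mem_univ i)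
      have : (a • c + b) i = a * c i + b i := by
        simp [Pi.smul_apply, Pi.add_apply, smul_eq_mul]
      omega
    have hΛmem : p N' (a • c + b) ∈ Λ := hmem N' (a • c + b) hle
    obtain ⟨g, hg, f, hf, hgf⟩ := Set.mem_add.mp (h1 hΛmem)
    exact ⟨⟨f, hf⟩, by rw [← hgf]; simpa using hg⟩
  have hcolsome : ∀ c (hc : c ∈ S), col N' (a • c + b) = some (hdef c hc).choose := by
    intro c hc
    simp only [hcoldef]
    rw [dif_pos (hdef c hc)]
  have hcoly : ∀ c ∈ S, col N' (a • c + b) = y := by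
    intro c hc
    rw [hN'col c hc, hmono c hc]
  have h0S : (0 : Fin k → ℕ) ∈ S := by
    simp [hS, Fintype.mem_piFinset]
  obtain ⟨f₀, hf₀⟩ : ∃ f₀ : ↥F, y = some f₀ := by
    refine ⟨(hdef 0 h0S).choose, ?_⟩
    rw [← hcoly 0 h0S, hcolsome 0 h0S]
  have hΓmem : ∀ c ∈ S, p N' (a • c + b) - (f₀ : EuclideanSpace ℝ (Fin d)) ∈ Γ := by
    intro c hc
    have h₁ := hcolsome c hc
    have h₂ := hcoly c hc
    rw [h₂, hf₀] at h₁
    have : (hdef c hc).choose = f₀ := Option.some.inj h₁.symm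
    have hspec := (hdef c hc).choose_spec
    rwa [this] at hspec
  -- build the AP of `Γ`
  refine ⟨s N' + (∑ i, (b i : ℝ) • r N' i) - (f₀ : EuclideanSpace ℝ (Fin d)), fun i => (a : ℝ) • r N' i, ?_, ?_⟩
  · have hinj : Function.Injective (fun v : EuclideanSpace ℝ (Fin d) => (a : ℝ) • v) := by
      apply smul_right_injective
      exact_mod_cast Nat.pos_iff_ne_zero.mp ha
    exact (hli N').map' (((a : ℝ) • (LinearMap.id : EuclideanSpace ℝ (Fin d) →ₗ[ℝ] EuclideanSpace ℝ (Fin d))).restrictScalars ℤ)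
      (LinearMap.ker_eq_bot.mpr hinj)
  · intro c hcle
    have hc : c ∈ S := by
      simp only [hS, Fintype.mem_piFinset, Finset.mem_range, Nat.lt_succ_iff]
      exact hcle
    have hmem' := hΓmem c hc
    have heq : p N' (a • c + b) - (f₀ : EuclideanSpace ℝ (Fin d))
        = s N' + (∑ i, (b i : ℝ) • r N' i) - (f₀ : EuclideanSpace ℝ (Fin d))
          + ∑ i, (c i : ℝ) • ((a : ℝ) • r N' i) := by
      simp only [hp]
      have hterm : ∀ i : Fin k, (((a • c + b) i : ℕ) : ℝ) • r N' i
          = (c i : ℝ) • ((a : ℝ) • r N' i) + (b i : ℝ) • r N' i := by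
        intro i
        have : ((a • c + b) i : ℕ) = a * c i + b i := by
          simp [Pi.smul_apply, Pi.add_apply, smul_eq_mul]
        rw [this]
        push_cast
        rw [add_smul, smul_smul, mul_comm]
      rw [Finset.sum_congr rfl fun i _ => hterm i, Finset.sum_add_distrib]
      abel
    rw [← heq]
    exact hmem'

/-- if two Meyer sets `Λ, Γ ⊆ ℝ^d` are equivalent by finite
translations, then for every `k`, `Λ` contains li-arithmetic progressions of rank
`k` and every length iff `Γ` does. In particular `aprank Λ = aprank Γ`. -/
theorem stmt_11 {d : ℕ} (Λ Γ : Set (EuclideanSpace ℝ (Fin d)))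
    (hΛ : IsMeyerSet Λ) (hΓ : IsMeyerSet Γ)
    (F : Set (EuclideanSpace ℝ (Fin d))) (hF : F.Finite)
    (h1 : Λ ⊆ Γ + F) (h2 : Γ ⊆ Λ + F) (k : ℕ) :
    (∀ N : ℕ, HasLiAP Λ k N) ↔ (∀ N : ℕ, HasLiAP Γ k N) :=
  ⟨fun h => hasLiAP_of_subset_add Λ Γ F hF h1 h,
   fun h => hasLiAP_of_subset_add Γ Λ F hF h2 h⟩
end

section
/- Let Λ ⊆ ℝ^d be a Meyer set, F ⊆ ℝ^d finite, (ℝ^d, ℝ^m, ℒ) a fully Euclidean cut-and-project scheme, and W ⊆ ℝ^m precompact with nonempty interior, such that Λ ⊆ Λ(W) + F. Then Λ and Λ(W) are equivalent by finite translations, i.e., there exists a finite set F' ⊆ ℝ^d such that Λ ⊆ Λ(W) + F' and Λ(W) ⊆ Λ + F'. -/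
open scoped Pointwise

lemma cutProject_finite_of_bounded {d m : ℕ}
    (L : AddSubgroup (EuclideanSpace ℝ (Fin d) × EuclideanSpace ℝ (Fin m)))
    [DiscreteTopology L]
    (W' : Set (EuclideanSpace ℝ (Fin m))) (B : Set (EuclideanSpace ℝ (Fin d)))
    (hW' : Bornology.IsBounded W') (hB : Bornology.IsBounded B) :
    (cutProject L W' ∩ B).Finite := by
  have hK : IsCompact (closure B ×ˢ closure W') :=
    (hB.isCompact_closure).prod (hW'.isCompact_closure)
  have hLc : IsClosed ((L : Set (EuclideanSpace ℝ (Fin d) × EuclideanSpace ℝ (Fin m)))) :=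
    AddSubgroup.isClosed_of_discrete
  have hT : IsCompact ((L : Set _) ∩ (closure B ×ˢ closure W')) :=
    hK.inter_left hLc
  have hTd : DiscreteTopology ((L : Set _) ∩ (closure B ×ˢ closure W') :
      Set (EuclideanSpace ℝ (Fin d) × EuclideanSpace ℝ (Fin m))) :=
    DiscreteTopology.of_subset inferInstance Set.inter_subset_left
  have hTfin : ((L : Set _) ∩ (closure B ×ˢ closure W')).Finite := hT.finite (isDiscrete_iff_discreteTopology.mpr hTd)
  refine Set.Finite.subset (hTfin.image Prod.fst) ?_
  rintro x ⟨⟨y, hyW, hxL⟩, hxB⟩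
  exact ⟨(x, y), ⟨hxL, subset_closure hxB, subset_closure hyW⟩, rfl⟩

/-- if a Meyer set `Λ ⊆ ℝ^d` satisfies `Λ ⊆ Λ(W) + F` for a fully
Euclidean model set `Λ(W)` and a finite set `F`, then `Λ` and `Λ(W)` are equivalent
by finite translations. -/
theorem stmt_12 {d m : ℕ} (Λ : Set (EuclideanSpace ℝ (Fin d))) (hΛ : IsMeyerSet Λ)
    (L : AddSubgroup (EuclideanSpace ℝ (Fin d) × EuclideanSpace ℝ (Fin m)))
    (hL : IsCPS d m L) (W : Set (EuclideanSpace ℝ (Fin m)))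
    (hWc : IsCompact (closure W)) (hWi : (interior W).Nonempty)
    (F : Set (EuclideanSpace ℝ (Fin d))) (hF : F.Finite)
    (hsub : Λ ⊆ cutProject L W + F) :
    ∃ F' : Set (EuclideanSpace ℝ (Fin d)), F'.Finite ∧
      Λ ⊆ cutProject L W + F' ∧ cutProject L W ⊆ Λ + F' := by
  obtain ⟨R, hR, hdense⟩ := hΛ.1
  haveI : DiscreteTopology L := hL.1.1
  -- the set of short differences
  set S : Set (EuclideanSpace ℝ (Fin d)) :=
    {z | z ∈ cutProject L W - Λ ∧ ‖z‖ < R} with hS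
  have hWb : Bornology.IsBounded W :=
    (hWc.isBounded).subset subset_closure
  -- Λ(W) - Λ(W) ⊆ Λ(W - W)
  have hdiff : cutProject L W - cutProject L W ⊆ cutProject L (W - W) := by
    rintro z ⟨a, ⟨ya, hya, haL⟩, b, ⟨yb, hyb, hbL⟩, rfl⟩
    exact ⟨ya - yb, Set.sub_mem_sub hya hyb, L.sub_mem haL hbL⟩
  -- S is finite
  have hSfin : S.Finite := by
    have hcover : S ⊆ ⋃ f ∈ F,
        (fun t => t - f) '' (cutProject L (W - W) ∩ Metric.closedBall 0 (R + ‖f‖)) := by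
      rintro z ⟨⟨a, ha, b, hb, rfl⟩, hz⟩
      obtain ⟨a', ha', f, hf, hb'⟩ := hsub hb
      refine Set.mem_biUnion hf ⟨a - b + f, ⟨?_, ?_⟩, by abel⟩
      · have : a - b + f = a - a' := by rw [← hb']; beta_reduce; abel
        rw [this]
        exact hdiff (Set.sub_mem_sub ha ha')
      · rw [Metric.mem_closedBall, dist_zero_right]
        calc ‖a - b + f‖ ≤ ‖a - b‖ + ‖f‖ := norm_add_le _ _
          _ ≤ R + ‖f‖ := by
            have := hz
            simp only [Set.mem_setOf_eq] at this
            linarith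
    refine Set.Finite.subset (hF.biUnion fun f _ => ?_) hcover
    exact (cutProject_finite_of_bounded L (W - W) (Metric.closedBall 0 (R + ‖f‖))
      (hWb.sub hWb) Metric.isBounded_closedBall).image _
  refine ⟨F ∪ S, hF.union hSfin, ?_, ?_⟩
  · exact hsub.trans (Set.add_subset_add_left Set.subset_union_left)
  · intro x hx
    obtain ⟨y, hy, hyx⟩ := hdense x
    refine ⟨y, hy, x - y, Set.mem_union_right _ ⟨Set.sub_mem_sub hx hy, ?_⟩, by show y + (x - y) = x; rw [add_comm]; exact sub_add_cancel x y⟩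
    rw [Metric.mem_ball] at hyx
    rw [← dist_eq_norm]
    exact (dist_comm x y ▸ hyx)
end

section
/- Let Λ ⊆ ℝ^d be a Meyer set. Suppose (ℝ^d, ℝ^m, ℒ) and (ℝ^d, ℝ^n, ℒ') are two fully Euclidean cut-and-project schemes, W ⊆ ℝ^m and W' ⊆ ℝ^n are precompact with nonempty interior, and F, F' ⊆ ℝ^d are finite sets such that Λ ⊆ Λ(W) + F and Λ ⊆ Λ'(W') + F' (where Λ(W) and Λ'(W') are the model sets in the respective CPS). Then m = n. -/
open scoped Pointwise

section AuxMeyerCPS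

open Module Submodule

lemma aux_linear_eq_zero_of_bounded {E : Type*} [NormedAddCommGroup E] [NormedSpace ℝ E]
    (ψ : E →ₗ[ℝ] ℝ) (c : ℝ) (h : ∀ v, |ψ v| ≤ c) : ψ = 0 := by
  ext v
  simp only [LinearMap.zero_apply]
  by_contra hv
  have hpos : 0 < |ψ v| := abs_pos.2 hv
  have hc0 : 0 ≤ c := le_trans (abs_nonneg _) (h 0)
  have hs := h ((c / |ψ v| + 1) • v)
  rw [map_smul, smul_eq_mul, abs_mul, abs_of_pos (by positivity : (0:ℝ) < c / |ψ v| + 1)] at hs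
  have hfe : (c / |ψ v| + 1) * |ψ v| = c + |ψ v| := by field_simp
  nlinarith

lemma aux_bnd {E : Type*} [NormedAddCommGroup E] [NormedSpace ℝ E] [FiniteDimensional ℝ E]
    {D : Set E} {ρ : ℝ}
    (hP1 : ∀ v : E, ∃ k : ℕ, 1 ≤ k ∧ ∃ x ∈ D, ‖x - (k : ℝ) • v‖ ≤ ρ)
    (ψ : E →ₗ[ℝ] ℝ) (c : ℝ) (hc : 0 ≤ c) (hD : ∀ x ∈ D, |ψ x| ≤ c) : ψ = 0 := by
  set ψC := LinearMap.toContinuousLinearMap ψ with hψC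
  have hcoe : ∀ w, ψ w = ψC w := fun w => rfl
  have hρψ : 0 ≤ ‖ψC‖ * ρ := by
    obtain ⟨k, hk, x, hx, hb⟩ := hP1 0
    have hρ : 0 ≤ ρ := by simpa [smul_zero] using (norm_nonneg _).trans hb
    positivity
  refine aux_linear_eq_zero_of_bounded ψ (c + ‖ψC‖ * ρ) (fun v => ?_)
  obtain ⟨k, hk, x, hx, hb⟩ := hP1 v
  have h1 : |ψ ((k : ℝ) • v) - ψ x| ≤ ‖ψC‖ * ρ := by
    rw [← map_sub, hcoe]
    calc ‖ψC ((k : ℝ) • v - x)‖ ≤ ‖ψC‖ * ‖(k : ℝ) • v - x‖ := ψC.le_opNorm _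
    _ ≤ ‖ψC‖ * ρ := by
        apply mul_le_mul_of_nonneg_left _ (norm_nonneg _)
        rwa [norm_sub_rev]
  have h2 : |ψ ((k : ℝ) • v)| ≤ c + ‖ψC‖ * ρ := by
    have : ψ ((k : ℝ) • v) = ψ x + (ψ ((k : ℝ) • v) - ψ x) := by ring
    rw [this]
    exact (abs_add_le _ _).trans (add_le_add (hD x hx) h1)
  have h3 : (k : ℝ) * |ψ v| ≤ c + ‖ψC‖ * ρ := by
    rw [map_smul, smul_eq_mul, abs_mul, abs_of_nonneg (by positivity : (0:ℝ) ≤ (k:ℝ))] at h2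
    exact h2
  have hk1 : (1 : ℝ) ≤ (k : ℝ) := by exact_mod_cast hk
  nlinarith [abs_nonneg (ψ v)]

lemma aux_span_top_of_dual {E : Type*} [NormedAddCommGroup E] [NormedSpace ℝ E]
    [FiniteDimensional ℝ E] (S : Set E)
    (h : ∀ φ : E →ₗ[ℝ] ℝ, (∀ x ∈ S, φ x = 0) → φ = 0) : span ℝ S = ⊤ := by
  by_contra hS
  obtain ⟨v, hv⟩ : ∃ v, v ∉ span ℝ S := by
    by_contra hv; push_neg at hv
    exact hS (eq_top_iff.2 fun x _ => hv x)
  have hv0 : Submodule.Quotient.mk (p := span ℝ S) v ≠ 0 := by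
    simpa [Submodule.Quotient.mk_eq_zero] using hv
  obtain ⟨φq, hφq⟩ : ∃ φq : Module.Dual ℝ (E ⧸ span ℝ S),
      φq (Submodule.Quotient.mk v) ≠ 0 := by
    by_contra hq; push_neg at hq
    exact hv0 ((Module.forall_dual_apply_eq_zero_iff ℝ _).1 hq)
  have hz := h (φq ∘ₗ (span ℝ S).mkQ) (fun x hx => by
    simp [Submodule.mkQ_apply, (Submodule.Quotient.mk_eq_zero _).2 (subset_span hx)])
  exact hφq (by simpa using congrFun (congrArg (fun f => f.toFun) hz) v)

set_option maxHeartbeats 1000000 in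
set_option synthInstance.maxHeartbeats 400000 in
private lemma aux_key {d m : ℕ}
    (L : AddSubgroup (EuclideanSpace ℝ (Fin d) × EuclideanSpace ℝ (Fin m)))
    (hCPS : IsCPS d m L)
    (C : Set (EuclideanSpace ℝ (Fin m))) (hC : ∃ c : ℝ, ∀ y ∈ C, ‖y‖ ≤ c)
    (D : Set (EuclideanSpace ℝ (Fin d))) (ρ : ℝ)
    (hlift : ∀ x ∈ D, ∃ y ∈ C, (x, y) ∈ L)
    (hP1 : ∀ v : EuclideanSpace ℝ (Fin d), ∃ k : ℕ, 1 ≤ k ∧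
      ∃ x ∈ D, ‖x - (k : ℝ) • v‖ ≤ ρ) :
    Module.finrank ℤ (AddSubgroup.closure D) = d + m := by
  classical
  let Ed := EuclideanSpace ℝ (Fin d)
  let Em := EuclideanSpace ℝ (Fin m)
  haveI hdiscL : DiscreteTopology L := hCPS.1.1
  obtain ⟨c0, hc0, hCbd⟩ : ∃ c : ℝ, 0 ≤ c ∧ ∀ y ∈ C, ‖y‖ ≤ c := by
    obtain ⟨c, hc⟩ := hC
    exact ⟨max c 0, le_max_right _ _, fun y hy => (hc y hy).trans (le_max_left _ _)⟩
  set Γ : AddSubgroup Ed := AddSubgroup.closure D with hΓ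
  set Mg : AddSubgroup (Ed × Em) :=
    L ⊓ AddSubgroup.comap (AddMonoidHom.fst Ed Em) Γ with hMg
  have hMgL : ∀ p ∈ Mg, p ∈ L := fun p hp => hp.1
  have hDlift : ∀ x ∈ D, ∃ y ∈ C, (x, y) ∈ Mg := by
    intro x hx
    obtain ⟨y, hy, hxy⟩ := hlift x hx
    exact ⟨y, hy, hxy, AddSubgroup.subset_closure hx⟩
  set MZ : Submodule ℤ (Ed × Em) := AddSubgroup.toIntSubmodule Mg with hMZ
  haveI hdiscM : DiscreteTopology MZ := by
    refine DiscreteTopology.of_subset (s := (L : Set (Ed × Em))) hdiscL ?_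
    intro p hp; exact hMgL p hp
  set V : Submodule ℝ (Ed × Em) := span ℝ (MZ : Set (Ed × Em)) with hV
  have hspanD : span ℝ D = ⊤ := by
    refine aux_span_top_of_dual D (fun φ hφ => ?_)
    exact aux_bnd hP1 φ 0 le_rfl (fun x hx => by rw [hφ x hx]; simp)
  have hfstV : ∀ x : Ed, ∃ y : Em, (x, y) ∈ V := by
    intro x
    have hmap : span ℝ D ≤ V.map (LinearMap.fst ℝ Ed Em) := by
      rw [span_le]
      intro z hz
      obtain ⟨y, hy, hzy⟩ := hDlift z hz
      exact ⟨(z, y), subset_span hzy, rfl⟩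
    have hx : x ∈ V.map (LinearMap.fst ℝ Ed Em) := hmap (by rw [hspanD]; trivial)
    obtain ⟨p, hp, hpx⟩ := hx
    exact ⟨p.2, by rwa [show (x, p.2) = p from Prod.ext hpx.symm rfl]⟩
  set U : Submodule ℝ Em := V.comap (LinearMap.inr ℝ Ed Em) with hU
  -- all second components of V lie in U
  have hsndU : ∀ p : Ed × Em, p ∈ V → p.2 ∈ U := by
    have hπsurj : LinearMap.range ((LinearMap.fst ℝ Ed Em) ∘ₗ V.subtype) = ⊤ := by
      rw [eq_top_iff]
      rintro x -
      obtain ⟨y, hy⟩ := hfstV x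
      exact ⟨⟨(x, y), hy⟩, rfl⟩
    obtain ⟨σ, hσ⟩ :=
      ((LinearMap.fst ℝ Ed Em) ∘ₗ V.subtype).exists_rightInverse_of_surjective hπsurj
    have hσ1 : ∀ x : Ed, ((σ x : Ed × Em)).1 = x := by
      intro x
      exact congrFun (congrArg (fun f => f.toFun) hσ) x
    have hker : ∀ w : V, (w : Ed × Em).1 = 0 → (w : Ed × Em).2 ∈ U := by
      intro w hw
      have hmem : ((0 : Ed), (w : Ed × Em).2) ∈ V := by
        rw [show ((0 : Ed), (w : Ed × Em).2) = (w : Ed × Em) from Prod.ext hw.symm rfl]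
        exact w.2
      exact hmem
    have hβ : ∀ β : Em →ₗ[ℝ] ℝ, (∀ u ∈ U, β u = 0) → ∀ p ∈ V, β p.2 = 0 := by
      intro β hβU
      set T : Ed →ₗ[ℝ] ℝ := β ∘ₗ (LinearMap.snd ℝ Ed Em) ∘ₗ V.subtype ∘ₗ σ with hT
      have hTeq : ∀ p : Ed × Em, ∀ hp : p ∈ V, T p.1 = β p.2 := by
        intro p hp
        have h1 : ((σ p.1 - ⟨p, hp⟩ : V) : Ed × Em).1 = 0 := by
          simp [hσ1 p.1]
        have h2 := hker _ h1
        have h3 : β (((σ p.1 : V) : Ed × Em).2 - p.2) = 0 := hβU _ h2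
        rw [map_sub, sub_eq_zero] at h3
        exact h3
      have hTD : ∀ x ∈ D, |T x| ≤ ‖β.toContinuousLinearMap‖ * c0 := by
        intro x hx
        obtain ⟨y, hy, hxy⟩ := hDlift x hx
        have hxyV : ((x, y) : Ed × Em) ∈ V := subset_span hxy
        have := hTeq (x, y) hxyV
        rw [show T x = β y from this]
        calc |β y| = ‖β.toContinuousLinearMap y‖ := rfl
        _ ≤ ‖β.toContinuousLinearMap‖ * ‖y‖ := β.toContinuousLinearMap.le_opNorm y
        _ ≤ ‖β.toContinuousLinearMap‖ * c0 := by
            exact mul_le_mul_of_nonneg_left (hCbd y hy) (norm_nonneg _)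
      have hT0 : T = 0 := aux_bnd hP1 T _ (by positivity) hTD
      intro p hp
      rw [← hTeq p hp, hT0]
      rfl
    intro p hp
    have hOO : p.2 ∈ Uᗮᗮ := by
      rw [Submodule.mem_orthogonal]
      intro w hw
      exact hβ (innerSL ℝ w).toLinearMap
        (fun u hu => by
          have := (Submodule.mem_orthogonal U w).1 hw u hu
          simpa [real_inner_comm] using this) p hp
    rwa [Submodule.orthogonal_orthogonal] at hOO
  have hVprod : V = (⊤ : Submodule ℝ Ed).prod U := by
    apply le_antisymm
    · intro p hp
      exact ⟨trivial, hsndU p hp⟩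
    · rintro ⟨x, u⟩ ⟨-, hu⟩
      obtain ⟨y, hy⟩ := hfstV x
      have h2 : ((0 : Ed), u) ∈ V := hu
      have h3 : ((0 : Ed), y) ∈ V := hsndU _ hy
      have heq : ((x, u) : Ed × Em) = (x, y) + (0, u) - (0, y) := by
        ext <;> simp
      rw [heq]
      exact sub_mem (add_mem hy h2) h3
  by_cases hUtop : U = ⊤
  · have hVtop : V = ⊤ := by
      rw [hVprod, hUtop]
      exact Submodule.prod_top
    haveI : IsZLattice ℝ MZ := ⟨hVtop⟩
    have hrk : finrank ℤ MZ = finrank ℝ (Ed × Em) := ZLattice.rank ℝ MZ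
    have hrkP : finrank ℝ (Ed × Em) = d + m := by
      rw [Module.finrank_prod]
      simp [Ed, Em]
    have hinj : ∀ p ∈ Mg, ∀ q ∈ Mg, p.1 = q.1 → p = q :=
      fun p hp q hq => hCPS.2.1 p (hMgL p hp) q (hMgL q hq)
    have hsurj : ∀ x ∈ Γ, ∃ p, p ∈ Mg ∧ p.1 = x := by
      have hle : Γ ≤ AddSubgroup.map (AddMonoidHom.fst Ed Em) Mg := by
        rw [hΓ, AddSubgroup.closure_le]
        intro x hx
        obtain ⟨y, hy, hxy⟩ := hDlift x hx
        exact ⟨(x, y), hxy, rfl⟩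
      intro x hx
      obtain ⟨p, hp, hpx⟩ := hle hx
      exact ⟨p, hp, hpx⟩
    have e : MZ ≃ₗ[ℤ] Γ := by
      refine AddEquiv.toIntLinearEquiv ?_
      refine AddEquiv.mk' (Equiv.ofBijective
        (fun p => (⟨(p : Ed × Em).1, (p.2 : (p : Ed × Em) ∈ Mg).2⟩ : Γ)) ⟨?_, ?_⟩)
        (fun p q => rfl)
      · intro p q hpq
        have := hinj _ (p.2 : (p : Ed × Em) ∈ Mg) _ (q.2 : (q : Ed × Em) ∈ Mg)
          (congrArg Subtype.val hpq)
        exact Subtype.ext this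
      · rintro ⟨x, hx⟩
        obtain ⟨p, hp, hpx⟩ := hsurj x hx
        exact ⟨⟨p, hp⟩, Subtype.ext hpx⟩
    rw [e.symm.finrank_eq, hrk, hrkP]
  · exfalso
    -- `L` spans everything by cocompactness
    set LZ : Submodule ℤ (Ed × Em) := AddSubgroup.toIntSubmodule L with hLZ
    haveI hdiscLZ : DiscreteTopology LZ := hdiscL
    have hLspan : span ℝ ((LZ : Set (Ed × Em))) = ⊤ := by
      obtain ⟨K, hKc, hKrep⟩ := hCPS.1.2
      refine aux_span_top_of_dual _ (fun φ hφ => ?_)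
      obtain ⟨cK, hcK⟩ :=
        (hKc.image φ.toContinuousLinearMap.continuous).isBounded.exists_norm_le
      refine aux_linear_eq_zero_of_bounded φ cK (fun z => ?_)
      obtain ⟨l, hl, hzl⟩ := hKrep z
      have h0 : φ l = 0 := hφ l hl
      have h1 : φ z = φ (z - l) := by rw [map_sub, h0, sub_zero]
      have h2 := hcK _ ⟨z - l, hzl, rfl⟩
      rw [h1, ← Real.norm_eq_abs]
      exact h2
    haveI : IsZLattice ℝ LZ := ⟨hLspan⟩
    have hrkL : finrank ℤ LZ = d + m := by
      rw [ZLattice.rank ℝ LZ, Module.finrank_prod]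
      simp [Ed, Em]
    -- dimension of V
    have hVrank : finrank ℝ V = d + finrank ℝ U := by
      have e2 : (((⊤ : Submodule ℝ Ed).prod U) : Submodule ℝ (Ed × Em)) ≃ₗ[ℝ] Ed × U :=
        { toFun := fun p => ((p : Ed × Em).1, ⟨(p : Ed × Em).2, p.2.2⟩)
          map_add' := fun a b => rfl
          map_smul' := fun c a => rfl
          invFun := fun q => ⟨(q.1, (q.2 : Em)), ⟨trivial, q.2.2⟩⟩
          left_inv := fun a => rfl
          right_inv := fun q => rfl }
      rw [hVprod, e2.finrank_eq, Module.finrank_prod]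
      simp [Ed]
    -- orthogonal complement of U
    set U' : Submodule ℝ Em := Uᗮ with hU'def
    have hU'rank : finrank ℝ U + finrank ℝ U' = m := by
      have := Submodule.finrank_add_finrank_orthogonal U
      simpa [Em] using this
    have hU'ne : U' ≠ ⊥ := fun h => hUtop (by rwa [Submodule.orthogonal_eq_bot_iff] at h)
    -- the orthogonal projection onto U'
    set prj : Em →ₗ[ℝ] Em := U'.subtype ∘ₗ (orthogonalProjection U').toLinearMap with hprjdef
    have hprjU : ∀ u ∈ U, prj u = 0 := by
      intro u hu
      have h1 : u ∈ U'ᗮ := Submodule.le_orthogonal_orthogonal U hu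
      have h2 : orthogonalProjection U' u = 0 :=
        orthogonalProjection_mem_subspace_orthogonalComplement_eq_zero h1
      simp [hprjdef, h2]
    have hprjU' : ∀ u ∈ U', prj u = u := by
      intro u hu
      have h2 := orthogonalProjection_mem_subspace_eq_self (K := U') ⟨u, hu⟩
      simp only [hprjdef, LinearMap.comp_apply, ContinuousLinearMap.coe_coe]
      rw [h2]
      rfl
    have hprjle : ∀ y : Em, ‖prj y‖ ≤ ‖y‖ := by
      intro y
      have h1 : ‖orthogonalProjection U' y‖ ≤ ‖orthogonalProjection U'‖ * ‖y‖ :=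
        (orthogonalProjection U').le_opNorm y
      have h2 : ‖orthogonalProjection U'‖ ≤ 1 := orthogonalProjection_norm_le U'
      have h3 : ‖prj y‖ = ‖orthogonalProjection U' y‖ := (Submodule.coe_norm _).symm
      calc ‖prj y‖ = ‖orthogonalProjection U' y‖ := h3
      _ ≤ ‖orthogonalProjection U'‖ * ‖y‖ := h1
      _ ≤ 1 * ‖y‖ := mul_le_mul_of_nonneg_right h2 (norm_nonneg _)
      _ = ‖y‖ := one_mul _
    have hprjmem : ∀ y : Em, prj y ∈ U' := fun y => (orthogonalProjection U' y).2
    -- the projected group A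
    set f : LZ →ₗ[ℤ] Em :=
      ((prj ∘ₗ LinearMap.snd ℝ Ed Em).restrictScalars ℤ) ∘ₗ LZ.subtype with hfdef
    set A : Submodule ℤ Em := LinearMap.range f with hAdef
    have hAU' : ∀ a ∈ A, a ∈ U' := by
      rintro a ⟨p, rfl⟩
      exact hprjmem _
    haveI hfinA : Module.Finite ℤ A := Module.Finite.range f
    haveI hnzEm : NoZeroSMulDivisors ℤ Em := by
      haveI := IsAddTorsionFree.of_module_rat (EuclideanSpace ℝ (Fin m))
      infer_instance
    haveI hnzA : NoZeroSMulDivisors ℤ A :=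
      Function.Injective.noZeroSMulDivisors _ Subtype.val_injective rfl (fun _ _ => rfl)
    haveI hfreeA : Module.Free ℤ A := Module.free_of_finite_type_torsion_free'
    -- the kernel of f contains the `d + finrank U` dimensional lattice M
    have hMle : MZ ≤ LZ := fun p hp => hMgL p hp
    obtain ⟨t, htM, htspan, htli⟩ := exists_linearIndependent ℝ (MZ : Set (Ed × Em))
    haveI htfin : Fintype t := htli.setFinite.fintype
    have htcard : t.toFinset.card = d + finrank ℝ U := by
      have h1 : finrank ℝ (span ℝ t) = t.toFinset.card := finrank_span_set_eq_card htli
      rw [htspan, ← hV] at h1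
      rw [← h1, hVrank]
    have htker : ∀ x : t, ∃ hx : (x : Ed × Em) ∈ LZ,
        (⟨(x : Ed × Em), hx⟩ : LZ) ∈ LinearMap.ker f := by
      rintro ⟨x, hx⟩
      have hxM : x ∈ MZ := htM hx
      refine ⟨hMle hxM, ?_⟩
      have hxV : x ∈ V := subset_span hxM
      have hx2 : x.2 ∈ U := hsndU x hxV
      simp only [LinearMap.mem_ker, hfdef, LinearMap.comp_apply, coe_subtype,
        LinearMap.restrictScalars_apply]
      exact hprjU _ hx2
    set w : t → LinearMap.ker f :=
      fun x => ⟨⟨(x : Ed × Em), (htker x).choose⟩, (htker x).choose_spec⟩ with hwdef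
    have hwli : LinearIndependent ℤ w := by
      have hliZ : LinearIndependent ℤ (fun x : t => (x : Ed × Em)) := by
        refine htli.restrict_scalars ?_
        intro a b hab
        have : (a : ℝ) = b := by simpa using hab
        exact_mod_cast this
      refine LinearIndependent.of_comp (LZ.subtype ∘ₗ (LinearMap.ker f).subtype) ?_
      exact hliZ
    have hkerrank : ((d + finrank ℝ U : ℕ) : Cardinal) ≤ Module.rank ℤ (LinearMap.ker f) := by
      have h1 := hwli.cardinal_le_rank
      rw [Cardinal.mk_fintype] at h1
      have h2 : Fintype.card t = d + finrank ℝ U := by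
        rw [← Set.toFinset_card, htcard]
      rwa [h2] at h1
    -- splitting : rank ker + rank A ≤ rank L
    obtain ⟨σA, hσA⟩ := Module.projective_lifting_property f.rangeRestrict LinearMap.id
      f.surjective_rangeRestrict
    set g2 : (LinearMap.ker f × A) →ₗ[ℤ] LZ := (LinearMap.ker f).subtype.coprod σA with hg2
    have hg2inj : Function.Injective g2 := by
      rw [← LinearMap.ker_eq_bot, LinearMap.ker_eq_bot']
      rintro ⟨k, a⟩ hka
      have hg2app : g2 (k, a) = (k : LZ) + σA a := rfl
      have h1 : f.rangeRestrict (g2 (k, a)) = 0 := by rw [hka]; simp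
      have hk0 : f.rangeRestrict (k : LZ) = 0 := by
        ext
        simpa using k.2
      have hσa : f.rangeRestrict (σA a) = a := by
        have h := congrFun (congrArg (fun g : A →ₗ[ℤ] A => ⇑g) hσA) a
        exact h
      have h2 : f.rangeRestrict (g2 (k, a)) = a := by
        rw [hg2app, map_add, hk0, hσa, zero_add]
      have ha : a = 0 := by rw [← h2, h1]
      have hk : (k : LZ) = 0 := by
        have h := hka
        rw [hg2app, ha, map_zero, add_zero] at h
        exact h
      exact Prod.ext (Subtype.ext hk) ha
    have hranksum : Module.rank ℤ (LinearMap.ker f) + Module.rank ℤ A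
        ≤ ((d + m : ℕ) : Cardinal) := by
      have h1 := LinearMap.rank_le_of_injective g2 hg2inj
      rw [rank_prod'] at h1
      have h2 : Module.rank ℤ LZ = ((d + m : ℕ) : Cardinal) := by
        rw [← finrank_eq_rank, hrkL]
      rwa [h2] at h1
    have hfArank : ((finrank ℤ A : ℕ) : Cardinal) = Module.rank ℤ A := finrank_eq_rank ℤ A
    have hAle : d + finrank ℝ U + finrank ℤ A ≤ d + m := by
      have h1 : ((d + finrank ℝ U : ℕ) : Cardinal) + ((finrank ℤ A : ℕ) : Cardinal)
          ≤ ((d + m : ℕ) : Cardinal) := by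
        calc ((d + finrank ℝ U : ℕ) : Cardinal) + ((finrank ℤ A : ℕ) : Cardinal)
            ≤ Module.rank ℤ (LinearMap.ker f) + Module.rank ℤ A := by
              rw [hfArank]; exact add_le_add hkerrank le_rfl
        _ ≤ ((d + m : ℕ) : Cardinal) := hranksum
      rw [← Nat.cast_add, Nat.cast_le] at h1
      omega
    have hAcard : finrank ℤ A ≤ finrank ℝ U' := by omega
    -- a basis of A, viewed as vectors of Em
    set bA : Basis (Fin (finrank ℤ A)) ℤ A := Module.finBasis ℤ A with hbA
    set gv : Fin (finrank ℤ A) → Em := fun i => ((bA i : A) : Em) with hgv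
    have hgvU' : ∀ i, gv i ∈ U' := fun i => hAU' _ (bA i).2
    have hAspan : A = span ℤ (Set.range gv) := by
      have h1 : Submodule.map A.subtype (span ℤ (Set.range bA)) = span ℤ (Set.range gv) := by
        rw [Submodule.map_span, ← Set.range_comp]
        rfl
      rw [← h1, Basis.span_eq, Submodule.map_top, Submodule.range_subtype]
    -- density of A in U'
    have hdenseA : ∀ u ∈ U', ∀ ε : ℝ, 0 < ε → ∃ a ∈ A, ‖(a : Em) - u‖ < ε := by
      intro u hu ε hε
      have hucl : u ∈ closure (Prod.snd '' (L : Set (Ed × Em))) := hCPS.2.2 _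
      rw [Metric.mem_closure_iff] at hucl
      obtain ⟨z, hz, hdist⟩ := hucl ε hε
      obtain ⟨p, hp, hpz⟩ := hz
      refine ⟨prj z, ⟨(⟨p, hp⟩ : LZ), by rw [← hpz]; rfl⟩, ?_⟩
      have heq : prj z - u = prj (z - u) := by rw [map_sub, hprjU' u hu]
      rw [heq]
      calc ‖prj (z - u)‖ ≤ ‖z - u‖ := hprjle _
      _ < ε := by rw [← dist_eq_norm]; rw [dist_comm] at hdist; exact hdist
    have hclA : ∀ u ∈ U', u ∈ closure (A : Set Em) := by
      intro u hu
      rw [Metric.mem_closure_iff]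
      intro ε hε
      obtain ⟨a, haA, hnear⟩ := hdenseA u hu ε hε
      exact ⟨a, haA, by rw [dist_comm, dist_eq_norm]; exact hnear⟩
    by_cases hTsp : span ℝ (Set.range gv) = U'
    · -- generators independent: A discrete and closed, contradicting density
      have hle1 : finrank ℝ U' ≤ finrank ℤ A := by
        have h := finrank_range_le_card (R := ℝ) gv
        unfold Set.finrank at h
        rw [hTsp] at h
        simpa using h
      have hcardeq : finrank ℤ A = finrank ℝ U' := by omega
      have hli : LinearIndependent ℝ gv := by
        rw [linearIndependent_iff_card_eq_finrank_span]
        unfold Set.finrank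
        rw [hTsp, Fintype.card_fin, hcardeq]
      have hlis : LinearIndepOn ℝ id (Set.range gv) := hli.linearIndepOn_id
      set sExt : Set Em := hlis.extend (Set.subset_univ (Set.range gv)) with hsExt
      set bE : Basis sExt ℝ Em := Basis.extend hlis with hbE
      haveI : Fintype sExt := FiniteDimensional.fintypeBasisIndex bE
      have hclosedE : IsClosed ((span ℤ (Set.range (bE : sExt → Em))) : Set Em) :=
        AddSubgroup.isClosed_of_discrete (H := (span ℤ (Set.range (bE : sExt → Em))).toAddSubgroup)
      have hsub : Set.range gv ⊆ Set.range (bE : sExt → Em) := by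
        rw [Basis.coe_extend, Subtype.range_coe]
        exact hlis.subset_extend _
      have hAsubE : (A : Set Em) ⊆ ((span ℤ (Set.range (bE : sExt → Em))) : Set Em) := by
        intro a ha
        rw [hAspan] at ha
        exact Submodule.span_mono hsub ha
      have hNpos : 0 < finrank ℤ A := by
        rw [hcardeq]
        by_contra h0
        push_neg at h0
        exact hU'ne (Submodule.finrank_eq_zero.1 (by omega))
      set i0 : Fin (finrank ℤ A) := ⟨0, hNpos⟩ with hi0
      set u0 : Em := (2⁻¹ : ℝ) • gv i0 with hu0
      have hu0U' : u0 ∈ U' := Submodule.smul_mem _ _ (hgvU' i0)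
      have hu0E : u0 ∈ span ℤ (Set.range (bE : sExt → Em)) := by
        have h := (closure_mono hAsubE) (hclA u0 hu0U')
        rwa [hclosedE.closure_eq] at h
      have hgvmem : gv i0 ∈ sExt := hlis.subset_extend _ ⟨i0, rfl⟩
      rw [Basis.mem_span_iff_repr_mem] at hu0E
      obtain ⟨z, hz⟩ := hu0E ⟨gv i0, hgvmem⟩
      have hbei : bE ⟨gv i0, hgvmem⟩ = gv i0 := by rw [Basis.coe_extend]
      have hrepr : bE.repr u0 ⟨gv i0, hgvmem⟩ = 2⁻¹ := by
        have heq2 : u0 = (2⁻¹ : ℝ) • bE ⟨gv i0, hgvmem⟩ := by rw [hbei]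
        rw [heq2, map_smul, Finsupp.smul_apply, bE.repr_self, Finsupp.single_apply]
        simp
      rw [hrepr] at hz
      have hzz : (z : ℝ) = 2⁻¹ := hz
      have h2z : ((2 * z : ℤ) : ℝ) = 1 := by push_cast; rw [hzz]; ring
      have h2z' : (2 * z : ℤ) = 1 := by exact_mod_cast h2z
      omega
    · -- generators span a proper closed subspace of U', contradicting density
      have hTle : span ℝ (Set.range gv) ≤ U' := by
        rw [span_le]
        rintro x ⟨i, rfl⟩
        exact hgvU' i
      obtain ⟨u, huU', hunot⟩ := SetLike.exists_of_lt (lt_of_le_of_ne hTle hTsp)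
      have hclosedT : IsClosed ((span ℝ (Set.range gv)) : Set Em) :=
        (span ℝ (Set.range gv)).closed_of_finiteDimensional
      have hAsubT : (A : Set Em) ⊆ ((span ℝ (Set.range gv)) : Set Em) := by
        intro a ha
        rw [hAspan] at ha
        exact Submodule.span_le_restrictScalars ℤ ℝ _ ha
      have hmem : u ∈ ((span ℝ (Set.range gv)) : Set Em) := by
        have h := (closure_mono hAsubT) (hclA u huU')
        rwa [hclosedT.closure_eq] at h
      exact hunot hmem

/-- if a Meyer set `Λ ⊆ ℝ^d` satisfies `Λ ⊆ Λ(W) + F` and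
`Λ ⊆ Λ'(W') + F'` for fully Euclidean model sets in CPSs `(ℝ^d, ℝ^m, ℒ)` and
`(ℝ^d, ℝ^n, ℒ')` and finite sets `F, F'`, then `m = n`. -/
theorem stmt_14 {d m n : ℕ} (Λ : Set (EuclideanSpace ℝ (Fin d))) (hΛ : IsMeyerSet Λ)
    (L : AddSubgroup (EuclideanSpace ℝ (Fin d) × EuclideanSpace ℝ (Fin m)))
    (hL : IsCPS d m L) (W : Set (EuclideanSpace ℝ (Fin m)))
    (hWc : IsCompact (closure W)) (hWi : (interior W).Nonempty)
    (L' : AddSubgroup (EuclideanSpace ℝ (Fin d) × EuclideanSpace ℝ (Fin n)))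
    (hL' : IsCPS d n L') (W' : Set (EuclideanSpace ℝ (Fin n)))
    (hWc' : IsCompact (closure W')) (hWi' : (interior W').Nonempty)
    (F F' : Set (EuclideanSpace ℝ (Fin d))) (hF : F.Finite) (hF' : F'.Finite)
    (hsub : Λ ⊆ cutProject L W + F) (hsub' : Λ ⊆ cutProject L' W' + F') :
    m = n := by
  classical
  obtain ⟨⟨R, hR, hball⟩, -⟩ := hΛ
  set C : Set (EuclideanSpace ℝ (Fin m)) := closure W - closure W with hCdef
  set C' : Set (EuclideanSpace ℝ (Fin n)) := closure W' - closure W' with hC'def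
  have hCb : ∃ c : ℝ, ∀ y ∈ C, ‖y‖ ≤ c := by
    obtain ⟨c, hc⟩ := hWc.isBounded.exists_norm_le
    refine ⟨c + c, ?_⟩
    rintro y hy
    obtain ⟨y1, hy1, y2, hy2, rfl⟩ := hy
    exact (norm_sub_le _ _).trans (add_le_add (hc _ hy1) (hc _ hy2))
  have hC'b : ∃ c : ℝ, ∀ y ∈ C', ‖y‖ ≤ c := by
    obtain ⟨c, hc⟩ := hWc'.isBounded.exists_norm_le
    refine ⟨c + c, ?_⟩
    rintro y hy
    obtain ⟨y1, hy1, y2, hy2, rfl⟩ := hy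
    exact (norm_sub_le _ _).trans (add_le_add (hc _ hy1) (hc _ hy2))
  set D : Set (EuclideanSpace ℝ (Fin d)) :=
    {x | (∃ y ∈ C, (x, y) ∈ L) ∧ (∃ y' ∈ C', (x, y') ∈ L')} with hDdef
  set N := (hF.toFinset ×ˢ hF'.toFinset).card with hN
  have hP1 : ∀ v : EuclideanSpace ℝ (Fin d), ∃ k : ℕ, 1 ≤ k ∧
      ∃ x ∈ D, ‖x - (k : ℝ) • v‖ ≤ 2 * R := by
    intro v
    have hpts : ∀ i : Fin (N + 1), ∃ y ∈ Λ, y ∈ Metric.ball ((((i : ℕ) : ℝ)) • v) R :=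
      fun i => hball _
    choose lam hlamΛ hlamb using hpts
    have hdec : ∀ i : Fin (N + 1), ∃ q ∈ hF.toFinset ×ˢ hF'.toFinset,
        (∃ y ∈ W, (lam i - q.1, y) ∈ L) ∧ (∃ y' ∈ W', (lam i - q.2, y') ∈ L') := by
      intro i
      obtain ⟨a, ha, f, hf, haf⟩ := Set.mem_add.1 (hsub (hlamΛ i))
      obtain ⟨a', ha', f', hf', haf'⟩ := Set.mem_add.1 (hsub' (hlamΛ i))
      obtain ⟨y, hy, hay⟩ := ha
      obtain ⟨y', hy', hay'⟩ := ha'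
      refine ⟨(f, f'), Finset.mem_product.2
        ⟨hF.mem_toFinset.2 hf, hF'.mem_toFinset.2 hf'⟩, ⟨y, hy, ?_⟩, ⟨y', hy', ?_⟩⟩
      · rw [show lam i - f = a from by rw [← haf]; abel]
        exact hay
      · rw [show lam i - f' = a' from by rw [← haf']; abel]
        exact hay'
    choose q hq hq1 hq2 using hdec
    obtain ⟨i0, -, j0, -, hij, hqij⟩ := Finset.exists_ne_map_eq_of_card_lt_of_maps_to
      (s := (Finset.univ : Finset (Fin (N + 1)))) (t := hF.toFinset ×ˢ hF'.toFinset)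
      (by simp [hN]) (fun i _ => hq i)
    obtain ⟨i, j, hlt, hqe⟩ : ∃ i j : Fin (N + 1), i < j ∧ q i = q j := by
      rcases hij.lt_or_gt with h | h
      exacts [⟨i0, j0, h, hqij⟩, ⟨j0, i0, h, hqij.symm⟩]
    have hltn : (i : ℕ) < (j : ℕ) := hlt
    refine ⟨(j : ℕ) - (i : ℕ), by omega, lam j - lam i, ⟨?_, ?_⟩, ?_⟩
    · obtain ⟨y, hyW, hyL⟩ := hq1 j
      obtain ⟨y2, hy2W, hy2L⟩ := hq1 i
      refine ⟨y - y2, Set.sub_mem_sub (subset_closure hyW) (subset_closure hy2W), ?_⟩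
      have hsL := L.sub_mem hyL hy2L
      have h1 : (lam j - (q j).1) - (lam i - (q i).1) = lam j - lam i := by
        rw [hqe]; abel
      rw [show ((lam j - lam i, y - y2) : _) =
        ((lam j - (q j).1) - (lam i - (q i).1), y - y2) from by rw [h1]]
      exact hsL
    · obtain ⟨y, hyW, hyL⟩ := hq2 j
      obtain ⟨y2, hy2W, hy2L⟩ := hq2 i
      refine ⟨y - y2, Set.sub_mem_sub (subset_closure hyW) (subset_closure hy2W), ?_⟩
      have hsL := L'.sub_mem hyL hy2L
      have h1 : (lam j - (q j).2) - (lam i - (q i).2) = lam j - lam i := by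
        rw [hqe]; abel
      rw [show ((lam j - lam i, y - y2) : _) =
        ((lam j - (q j).2) - (lam i - (q i).2), y - y2) from by rw [h1]]
      exact hsL
    · have hbj : dist (lam j) ((((j : ℕ) : ℝ)) • v) < R := Metric.mem_ball.1 (hlamb j)
      have hbi : dist (lam i) ((((i : ℕ) : ℝ)) • v) < R := Metric.mem_ball.1 (hlamb i)
      have hcast : ((((j : ℕ) - (i : ℕ) : ℕ)) : ℝ) = ((j : ℕ) : ℝ) - ((i : ℕ) : ℝ) :=
        Nat.cast_sub (le_of_lt hltn)
      have heq : (lam j - lam i) - ((((j : ℕ) - (i : ℕ) : ℕ)) : ℝ) • v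
          = (lam j - (((j : ℕ) : ℝ)) • v) - (lam i - (((i : ℕ) : ℝ)) • v) := by
        rw [hcast, sub_smul]
        abel
      rw [heq]
      rw [dist_eq_norm] at hbj hbi
      calc ‖(lam j - (((j : ℕ) : ℝ)) • v) - (lam i - (((i : ℕ) : ℝ)) • v)‖
          ≤ ‖lam j - (((j : ℕ) : ℝ)) • v‖ + ‖lam i - (((i : ℕ) : ℝ)) • v‖ := norm_sub_le _ _
      _ ≤ 2 * R := by linarith
  have h1 := aux_key L hL C hCb D (2 * R) (fun x hx => hx.1) hP1
  have h2 := aux_key L' hL' C' hC'b D (2 * R) (fun x hx => hx.2) hP1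
  omega

end AuxMeyerCPS
end

section
/- Let Λ ⊆ ℝ^d be a Meyer set. Then aprank(Λ) ≥ d; that is, for every N ∈ ℕ there exist s ∈ ℝ^d and vectors r₁, …, r_d ∈ ℝ^d linearly independent over ℤ such that s + ∑_{i=1}^{d} cᵢrᵢ ∈ Λ for all integers 0 ≤ cᵢ ≤ N. -/
open scoped Pointwise

/-- Coordinates are bounded by the Euclidean norm. -/
private lemma aux_abs_coord_le_norm {d : ℕ} (v : EuclideanSpace ℝ (Fin d)) (j : Fin d) :
    |v j| ≤ ‖v‖ := by
  rw [EuclideanSpace.norm_eq, ← Real.sqrt_sq_eq_abs]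
  apply Real.sqrt_le_sqrt
  have : |v j| ^ 2 ≤ ∑ i, ‖v i‖ ^ 2 := by
    rw [← Real.norm_eq_abs]
    exact Finset.single_le_sum (f := fun i => ‖v i‖ ^ 2) (fun i _ => by positivity)
      (Finset.mem_univ j)
  simpa using this

/-- Coordinatewise bounds give a (crude) Euclidean norm bound. -/
private lemma aux_norm_le_of_coords {d : ℕ} (v : EuclideanSpace ℝ (Fin d)) {c : ℝ}
    (hc : 0 ≤ c) (h : ∀ j, |v j| ≤ c) : ‖v‖ ≤ (d + 1) * c := by
  rw [EuclideanSpace.norm_eq]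
  have h1 : ∑ i, ‖v i‖ ^ 2 ≤ ((d : ℝ) + 1) ^ 2 * c ^ 2 := by
    calc ∑ i, ‖v i‖ ^ 2 ≤ ∑ _i : Fin d, c ^ 2 := by
          apply Finset.sum_le_sum
          intro i _
          rw [Real.norm_eq_abs]
          exact pow_le_pow_left₀ (abs_nonneg _) (h i) 2
      _ = (d : ℝ) * c ^ 2 := by simp [mul_comm]
      _ ≤ ((d : ℝ) + 1) ^ 2 * c ^ 2 := by
          have h2 : (d : ℝ) ≤ ((d : ℝ) + 1) ^ 2 := by nlinarith [Nat.cast_nonneg (α := ℝ) d]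
          nlinarith [sq_nonneg c]
  calc Real.sqrt (∑ i, ‖v i‖ ^ 2) ≤ Real.sqrt (((d : ℝ) + 1) ^ 2 * c ^ 2) :=
        Real.sqrt_le_sqrt h1
    _ = ((d : ℝ) + 1) * c := by
        rw [← mul_pow, Real.sqrt_sq (by positivity)]

/-- If scaled floors agree, the values are within `ε`. -/
private lemma aux_abs_sub_lt_of_floor_eq {x y ε : ℝ} (hε : 0 < ε) (h : ⌊x / ε⌋ = ⌊y / ε⌋) :
    |x - y| < ε := by
  have h1 := Int.abs_sub_lt_one_of_floor_eq_floor h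
  rw [div_sub_div_same, abs_div, abs_of_pos hε, div_lt_one hε] at h1
  exact h1

open Fin.NatCast

set_option maxHeartbeats 2000000

/-- every Meyer set `Λ ⊆ ℝ^d` has `aprank Λ ≥ d`: for every `N` it
contains an li-arithmetic progression of length `N` and rank `d`. -/
theorem stmt_15 {d : ℕ} (Λ : Set (EuclideanSpace ℝ (Fin d))) (hΛ : IsMeyerSet Λ) :
    ∀ N : ℕ, HasLiAP Λ d N := by
  obtain ⟨⟨R, hR, hdense⟩, ⟨r, hr, hdisc⟩⟩ := hΛ
  intro N
  -- separation of Λ - Λ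
  have hsep : ∀ u v : EuclideanSpace ℝ (Fin d), u ∈ Λ - Λ → v ∈ Λ - Λ →
      dist u v < r → u = v := by
    intro u v hu hv huv
    exact hdisc v ⟨hu, Metric.mem_ball.mpr huv⟩ ⟨hv, Metric.mem_ball.mpr (by simpa using hr)⟩
  set M : ℕ := max N 1 with hM
  have hM1 : 1 ≤ M := le_max_right N 1
  set ε : ℝ := r / (4 * (d + 1)) with hεdef
  have hε0 : 0 < ε := by positivity
  set emb : (Fin d → ℕ) → EuclideanSpace ℝ (Fin d) := fun z => WithLp.toLp 2 (fun j => r * (z j : ℝ))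
    with hemb
  choose f hfΛ hfball using fun z => hdense (emb z)
  have hfb : ∀ z j, |(f z - emb z) j| < R := by
    intro z j
    have h1 : dist (f z) (emb z) < R := Metric.mem_ball.mp (hfball z)
    rw [dist_eq_norm] at h1
    exact lt_of_le_of_lt (aux_abs_coord_le_norm _ j) h1
  -- the coloring
  set K : ℕ := (⌊2 * R / ε⌋).toNat + 1 with hK
  haveI : NeZero K := ⟨Nat.succ_ne_zero _⟩
  set ncol : (Fin d → ℕ) → Fin d → ℕ :=
    fun z j => (⌊((f z - emb z) j + R) / ε⌋).toNat with hncol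
  have hfloor_nonneg : ∀ z j, (0 : ℤ) ≤ ⌊((f z - emb z) j + R) / ε⌋ := by
    intro z j
    apply Int.floor_nonneg.mpr
    have h1 := (abs_lt.mp (hfb z j)).1
    apply div_nonneg _ hε0.le
    linarith
  have hncol_lt : ∀ z j, ncol z j < K := by
    intro z j
    have h1 : ((f z - emb z) j + R) / ε ≤ 2 * R / ε := by
      apply (div_le_div_iff_of_pos_right hε0).mpr
      have := (abs_lt.mp (hfb z j)).2
      linarith
    have h2 : ⌊((f z - emb z) j + R) / ε⌋ ≤ ⌊2 * R / ε⌋ := Int.floor_le_floor h1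
    have h3 : (⌊((f z - emb z) j + R) / ε⌋).toNat ≤ (⌊2 * R / ε⌋).toNat :=
      Int.toNat_le_toNat h2
    simp only [hncol, hK]
    omega
  set C : (Fin d → ℕ) → Fin d → Fin K := fun z j => (ncol z j : Fin K) with hC
  have hCeq : ∀ z w, C z = C w → ∀ j,
      |(f z - emb z) j - (f w - emb w) j| < ε := by
    intro z w h j
    have h1 : (ncol z j : Fin K) = (ncol w j : Fin K) := congrFun h j
    have h2 : ncol z j = ncol w j := by
      have := congrArg Fin.val h1
      rwa [Fin.val_natCast, Fin.val_natCast, Nat.mod_eq_of_lt (hncol_lt z j),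
        Nat.mod_eq_of_lt (hncol_lt w j)] at this
    have h3 : ⌊((f z - emb z) j + R) / ε⌋ = ⌊((f w - emb w) j + R) / ε⌋ := by
      have hz := hfloor_nonneg z j
      have hw := hfloor_nonneg w j
      simp only [hncol] at h2
      omega
    have h4 := aux_abs_sub_lt_of_floor_eq hε0 h3
    simpa using h4
  -- Gallai's theorem
  obtain ⟨a, ha, b, c₀, hmono⟩ := Combinatorics.exists_mono_homothetic_copy
    (M := Fin d → ℕ) (Fintype.piFinset fun _ => Finset.range (M + 1)) C
  have hmem : ∀ z : Fin d → ℕ, (∀ j, z j ≤ M) → C (a • z + b) = c₀ := by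
    intro z hz
    apply hmono
    rw [Fintype.mem_piFinset]
    intro j
    rw [Finset.mem_range]
    have := hz j
    omega
  have hb0 : C b = c₀ := by
    have := hmem 0 (fun j => Nat.zero_le M)
    simpa using this
  -- the steps
  set t : Fin d → EuclideanSpace ℝ (Fin d) :=
    fun i => f (a • (Pi.single i 1 : Fin d → ℕ) + b) - f b with ht
  have hEcol : ∀ i : Fin d, C (a • (Pi.single i 1 : Fin d → ℕ) + b) = c₀ := by
    intro i
    apply hmem
    intro j
    have h1 : (Pi.single i 1 : Fin d → ℕ) j ≤ 1 := by
      rcases eq_or_ne j i with h | h <;> simp [Pi.single_apply, h]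
    omega
  -- norm version of the color estimate
  have hgg : ∀ z w, C z = C w → ‖(f z - emb z) - (f w - emb w)‖ ≤ ((d : ℝ) + 1) * ε := by
    intro z w h
    apply aux_norm_le_of_coords _ hε0.le
    intro j
    have h1 := (hCeq z w h j).le
    calc |((f z - emb z) - (f w - emb w)) j|
        = |(f z - emb z) j - (f w - emb w) j| := by
          have e : ((f z - emb z) - (f w - emb w)) j
              = (f z - emb z) j - (f w - emb w) j := by simp
          rw [e]
      _ ≤ ε := h1
  have hde1 : ((d : ℝ) + 1) * ε = r / 4 := by
    rw [hεdef]
    field_simp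
  -- the key step lemma
  have hstep : ∀ (c' : Fin d → ℕ) (i : Fin d), (∀ j, (c' + (Pi.single i 1 : Fin d → ℕ)) j ≤ M) →
      f (a • (c' + (Pi.single i 1 : Fin d → ℕ)) + b) - f (a • c' + b) = t i := by
    intro c' i hc
    have hc' : ∀ j, c' j ≤ M := by
      intro j
      have := hc j
      simp only [Pi.add_apply] at this
      omega
    set A := a • (c' + (Pi.single i 1 : Fin d → ℕ)) + b with hA
    set B := a • c' + b with hB
    set Ei := a • (Pi.single i 1 : Fin d → ℕ) + b with hEi
    have hAc : C A = c₀ := hmem _ hc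
    have hBc : C B = c₀ := hmem _ hc'
    have hEc : C Ei = c₀ := hEcol i
    apply hsep
    · exact Set.sub_mem_sub (hfΛ A) (hfΛ B)
    · exact Set.sub_mem_sub (hfΛ Ei) (hfΛ b)
    rw [dist_eq_norm]
    have hembeq : emb A - emb B - (emb Ei - emb b) = 0 := by
      have : emb A - emb B = emb Ei - emb b := by
        ext j
        show (emb A - emb B) j = (emb Ei - emb b) j
        have e1 : (emb A - emb B) j = emb A j - emb B j := by simp
        have e2 : (emb Ei - emb b) j = emb Ei j - emb b j := by simp
        rw [e1, e2]
        simp only [hemb, PiLp.toLp_apply, hA, hB, hEi, Pi.add_apply, Pi.smul_apply, smul_eq_mul]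
        push_cast
        ring
      rw [this, sub_self]
    have hkey : f A - f B - (f Ei - f b) =
        ((f A - emb A) - (f Ei - emb Ei)) - ((f B - emb B) - (f b - emb b))
          + (emb A - emb B - (emb Ei - emb b)) := by abel
    calc ‖f A - f B - t i‖
        = ‖((f A - emb A) - (f Ei - emb Ei)) - ((f B - emb B) - (f b - emb b))‖ := by
          rw [ht]
          show ‖f A - f B - (f Ei - f b)‖ = _
          rw [hkey, hembeq, add_zero]
      _ ≤ ‖(f A - emb A) - (f Ei - emb Ei)‖ + ‖(f B - emb B) - (f b - emb b)‖ :=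
          norm_sub_le _ _
      _ ≤ ((d : ℝ) + 1) * ε + ((d : ℝ) + 1) * ε := by
          gcongr
          · exact hgg A Ei (hAc.trans hEc.symm)
          · exact hgg B b (hBc.trans hb0.symm)
      _ < r := by rw [hde1]; linarith
  -- coordinates of the steps
  have hexp : ∀ (i : Fin d) (j : Fin d), t i j =
      (if j = i then r * a else 0) +
        ((f (a • (Pi.single i 1 : Fin d → ℕ) + b) - emb (a • (Pi.single i 1 : Fin d → ℕ) + b)) j - (f b - emb b) j) := by
    intro i j
    have e1 : t i j = f (a • (Pi.single i 1 : Fin d → ℕ) + b) j - f b j := by rw [ht]; simp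
    have e2 : (f (a • (Pi.single i 1 : Fin d → ℕ) + b) - emb (a • (Pi.single i 1 : Fin d → ℕ) + b)) j
        = f (a • (Pi.single i 1 : Fin d → ℕ) + b) j - emb (a • (Pi.single i 1 : Fin d → ℕ) + b) j := by simp
    have e3 : (f b - emb b) j = f b j - emb b j := by simp
    have e4 : emb (a • (Pi.single i 1 : Fin d → ℕ) + b) j - emb b j = if j = i then r * a else 0 := by
      simp only [hemb, PiLp.toLp_apply, Pi.add_apply, Pi.smul_apply, smul_eq_mul, Pi.single_apply]
      push_cast
      rcases eq_or_ne j i with h | h <;> simp [h] <;> ring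
    rw [e1, e2, e3, ← e4]
    ring
  have hwbd : ∀ (i : Fin d) (j : Fin d),
      |(f (a • (Pi.single i 1 : Fin d → ℕ) + b) - emb (a • (Pi.single i 1 : Fin d → ℕ) + b)) j - (f b - emb b) j| < ε :=
    fun i j => hCeq _ _ ((hEcol i).trans hb0.symm) j
  -- ℝ-linear independence
  have hLIR : LinearIndependent ℝ t := by
    rw [Fintype.linearIndependent_iff]
    intro x hx
    by_contra hcon
    push_neg at hcon
    obtain ⟨i₁, hi₁⟩ := hcon
    obtain ⟨j₀, _, hj₀⟩ := Finset.exists_max_image Finset.univ (fun i => |x i|)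
      ⟨i₁, Finset.mem_univ i₁⟩
    have hpos : 0 < |x j₀| := lt_of_lt_of_le (abs_pos.mpr hi₁) (hj₀ i₁ (Finset.mem_univ i₁))
    have hx0 : ∑ i, x i * t i j₀ = 0 := by
      have h1 := congrArg (fun v : EuclideanSpace ℝ (Fin d) => v j₀) hx
      simp only at h1
      rw [show ((∑ i, x i • t i) j₀) = ∑ i, (x i • t i) j₀ from by rw [WithLp.ofLp_sum, Finset.sum_apply]] at h1
      simpa using h1
    set w : Fin d → ℝ := fun i =>
      (f (a • (Pi.single i 1 : Fin d → ℕ) + b) - emb (a • (Pi.single i 1 : Fin d → ℕ) + b)) j₀ - (f b - emb b) j₀ with hw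
    have hx1 : x j₀ * (r * a) + ∑ i, x i * w i = 0 := by
      have hsum2 : ∑ i, x i * t i j₀
          = (∑ i, x i * (if j₀ = i then r * (a : ℝ) else 0)) + ∑ i, x i * w i := by
        rw [← Finset.sum_add_distrib]
        apply Finset.sum_congr rfl
        intro i _
        rw [hexp i j₀]
        simp only [hw]
        ring
      have hsum3 : (∑ i, x i * (if j₀ = i then r * (a : ℝ) else 0)) = x j₀ * (r * a) := by
        simp [mul_ite, mul_zero, Finset.sum_ite_eq]
      rw [← hx0, hsum2, hsum3]
    have habs : |x j₀| * (r * a) ≤ (d : ℝ) * (|x j₀| * ε) := by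
      have h2 : x j₀ * (r * a) = -∑ i, x i * w i := by linarith
      calc |x j₀| * (r * a) = |x j₀ * (r * a)| := by
            rw [abs_mul, abs_of_nonneg (mul_nonneg hr.le (Nat.cast_nonneg a))]
        _ = |∑ i, x i * w i| := by rw [h2, abs_neg]
        _ ≤ ∑ i, |x i * w i| := Finset.abs_sum_le_sum_abs _ _
        _ ≤ ∑ _i : Fin d, |x j₀| * ε := by
            apply Finset.sum_le_sum
            intro i _
            rw [abs_mul]
            exact mul_le_mul (hj₀ i (Finset.mem_univ i)) (hwbd i j₀).le (abs_nonneg _)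
              (abs_nonneg _)
        _ = (d : ℝ) * (|x j₀| * ε) := by simp [mul_comm]
    have hdε : (d : ℝ) * ε < r := by
      rw [hεdef]
      rw [div_eq_mul_inv, ← mul_assoc]
      have hd1 : (0:ℝ) < 4 * ((d:ℝ) + 1) := by positivity
      rw [mul_inv_lt_iff₀ hd1]
      nlinarith [hr, Nat.cast_nonneg (α := ℝ) d]
    have ha1 : (1 : ℝ) ≤ (a : ℝ) := by exact_mod_cast ha
    have hLa : r ≤ r * a := by nlinarith [hr]
    nlinarith [hpos, habs, hdε, hLa, mul_le_mul_of_nonneg_left hLa (abs_nonneg (x j₀))]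
  have hLIZ : LinearIndependent ℤ t := by
    apply hLIR.restrict_scalars
    intro m n h
    simpa [zsmul_eq_mul] using h
  -- the grid
  have hgrid : ∀ n : ℕ, ∀ c : Fin d → ℕ, ∑ j, c j = n → (∀ j, c j ≤ M) →
      f (a • c + b) = f b + ∑ i, (c i : ℝ) • t i := by
    intro n
    induction n with
    | zero =>
      intro c hsum _
      have hc0 : c = 0 := by
        funext j
        have := Finset.sum_eq_zero_iff.mp hsum j (Finset.mem_univ j)
        simpa using this
      subst hc0
      simp
    | succ n ih =>
      intro c hsum hle
      have hex : ∃ i, c i ≠ 0 := by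
        by_contra hno
        push_neg at hno
        have : ∑ j, c j = 0 := Finset.sum_eq_zero (fun j _ => hno j)
        omega
      obtain ⟨i, hi⟩ := hex
      set c' : Fin d → ℕ := fun j => c j - (Pi.single i 1 : Fin d → ℕ) j with hc'
      have hcdecomp : c = c' + (Pi.single i 1 : Fin d → ℕ) := by
        funext j
        simp only [hc', Pi.add_apply, Pi.single_apply]
        rcases eq_or_ne j i with h | h
        · subst h; simp; omega
        · simp [h]
      have hsum' : ∑ j, c' j = n := by
        have h1 : ∑ j, c j = ∑ j, c' j + ∑ j, (Pi.single i 1 : Fin d → ℕ) j := by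
          rw [hcdecomp, ← Finset.sum_add_distrib]
          simp [Pi.add_apply]
        have h2 : ∑ j, (Pi.single i 1 : Fin d → ℕ) j = 1 := by simp [Pi.single_apply]
        omega
      have hle' : ∀ j, c' j ≤ M := by
        intro j
        have := hle j
        simp only [hc']
        omega
      have hstep' := hstep c' i (by rw [← hcdecomp]; exact hle)
      have hih := ih c' hsum' hle'
      have h3 : f (a • c + b) = f (a • c' + b) + t i := by
        rw [hcdecomp]
        have := hstep c' i (by rw [← hcdecomp]; exact hle)
        rw [← this]
        abel
      rw [h3, hih]
      have h4 : ∑ i', ((c i' : ℝ)) • t i' = (∑ i', ((c' i' : ℝ)) • t i') + t i := by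
        have h5 : ∀ i', (c i' : ℝ) = (c' i' : ℝ) + (if i' = i then 1 else 0) := by
          intro i'
          rw [hcdecomp]
          simp only [Pi.add_apply, Pi.single_apply]
          rcases eq_or_ne i' i with h | h <;> simp [h]
        calc ∑ i', ((c i' : ℝ)) • t i'
            = ∑ i', (((c' i' : ℝ)) • t i' + (if i' = i then (1:ℝ) else 0) • t i') := by
              apply Finset.sum_congr rfl
              intro i' _
              rw [h5 i', add_smul]
          _ = (∑ i', ((c' i' : ℝ)) • t i') + ∑ i', (if i' = i then (1:ℝ) else 0) • t i' :=
              Finset.sum_add_distrib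
          _ = (∑ i', ((c' i' : ℝ)) • t i') + t i := by
              congr 1
              have h6 : ∀ i', (if i' = i then (1:ℝ) else 0) • t i'
                  = if i' = i then t i' else 0 := by
                intro i'
                rcases eq_or_ne i' i with h | h <;> simp [h]
              rw [Finset.sum_congr rfl (fun i' _ => h6 i')]
              simp [Finset.sum_ite_eq, Finset.sum_ite_eq']
      rw [h4]
      abel
  -- conclusion
  refine ⟨f b, t, hLIZ, ?_⟩
  intro c hc
  have hle : ∀ j, c j ≤ M := fun j => (hc j).trans (le_max_left N 1)
  have := hgrid (∑ j, c j) c rfl hle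
  rw [← this]
  exact hfΛ (a • c + b)
end

section
/- Let Λ ⊆ ℝ^d be a Meyer set and let k ∈ ℕ be such that for every N ∈ ℕ, Λ contains an li-arithmetic progression of length N and rank k (e.g., k = aprank(Λ)). Then for every r, N ∈ ℕ there exists R > 0 such that for every colouring of Λ with r colours and every y ∈ ℝ^d, the set Λ ∩ B_R(y) contains a monochromatic li-arithmetic progression of length N and rank k. -/
open scoped Pointwise

open Filter in
lemma ultra_const {κ : Type*} [Finite κ] (U : Ultrafilter ℕ) (f : ℕ → κ) :
    ∃ v : κ, {L | f L = v} ∈ U := by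
  by_contra h
  push_neg at h
  have hc : ∀ v : κ, {L | f L = v}ᶜ ∈ U := fun v =>
    (Ultrafilter.compl_mem_iff_notMem).2 (h v)
  have hmem : (⋂ v : κ, {L | f L = v}ᶜ) ∈ U := by
    have := Fintype.ofFinite κ
    exact (Filter.iInter_mem).2 hc
  obtain ⟨L, hL⟩ := Ultrafilter.nonempty_of_mem hmem
  simp only [Set.mem_iInter, Set.mem_compl_iff, Set.mem_setOf_eq] at hL
  exact hL (f L) rfl

lemma gallai_finite (k N : ℕ) (κ : Type*) [Fintype κ] :
    ∃ L : ℕ, ∀ C : (Fin k → ℕ) → κ,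
      ∃ a : ℕ, 0 < a ∧ ∃ b : Fin k → ℕ,
        (∀ q : Fin k → ℕ, (∀ i, q i ≤ N) → ∀ i, a * q i + b i ≤ L) ∧
        ∃ col : κ, ∀ q : Fin k → ℕ, (∀ i, q i ≤ N) → C (a • q + b) = col := by
  by_contra h
  push_neg at h
  choose Cf hbad using h
  set U : Ultrafilter ℕ := Ultrafilter.of Filter.atTop with hU
  choose vfun hv using fun c : Fin k → ℕ => ultra_const U (fun L => Cf L c)
  set S : Finset (Fin k → ℕ) := Fintype.piFinset (fun _ : Fin k => Finset.range (N + 1)) with hS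
  obtain ⟨a, ha, b, col, hmono⟩ := Combinatorics.exists_mono_homothetic_copy S vfun
  have hTq : {L | a * N + Finset.univ.sup b ≤ L} ∈ U :=
    (Ultrafilter.of_le Filter.atTop) (Filter.mem_atTop _)
  have hbig : ({L | a * N + Finset.univ.sup b ≤ L} ∩
      ⋂ q ∈ S, {L | Cf L (a • q + b) = vfun (a • q + b)}) ∈ U :=
    Filter.inter_mem hTq ((Filter.biInter_finset_mem S).2 fun q _ => hv (a • q + b))
  obtain ⟨L, hL1, hL2⟩ := Ultrafilter.nonempty_of_mem hbig
  have hcontain : ∀ q : Fin k → ℕ, (∀ i, q i ≤ N) → ∀ i, a * q i + b i ≤ L := by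
    intro q hq i
    calc a * q i + b i ≤ a * N + Finset.univ.sup b :=
          add_le_add (Nat.mul_le_mul_left a (hq i)) (Finset.le_sup (Finset.mem_univ i))
      _ ≤ L := hL1
  obtain ⟨q, hq, hne⟩ := hbad L a ha b hcontain col
  have hqS : q ∈ S := by
    rw [hS, Fintype.mem_piFinset]
    exact fun i => Finset.mem_range.2 (Nat.lt_succ_of_le (hq i))
  exact hne ((Set.mem_iInter₂.1 hL2 q hqS).trans (hmono q hqS))


/-- let `Λ ⊆ ℝ^d` be a Meyer set and `k ∈ ℕ` be such that `Λ`
contains li-arithmetic progressions of rank `k` and every length (e.g. `k = aprank Λ`).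
Then for every `r, N` there is `R > 0` such that for every colouring of `Λ` with `r`
colours and every `y ∈ ℝ^d`, the set `Λ ∩ B_R(y)` contains a monochromatic
li-arithmetic progression of length `N` and rank `k`. -/
theorem stmt_16 {d : ℕ} (Λ : Set (EuclideanSpace ℝ (Fin d))) (hΛ : IsMeyerSet Λ)
    (k : ℕ) (hk : ∀ N : ℕ, HasLiAP Λ k N) (r N : ℕ) :
    ∃ R > (0 : ℝ), ∀ χ : EuclideanSpace ℝ (Fin d) → Fin r,
      ∀ y : EuclideanSpace ℝ (Fin d),
      ∃ (s : EuclideanSpace ℝ (Fin d)) (v : Fin k → EuclideanSpace ℝ (Fin d)),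
        LinearIndependent ℤ v ∧
        (∀ c : Fin k → ℕ, (∀ i, c i ≤ N) →
          s + ∑ i, (c i : ℝ) • v i ∈ Λ ∩ Metric.ball y R) ∧
        ∃ col : Fin r, ∀ c : Fin k → ℕ, (∀ i, c i ≤ N) →
          χ (s + ∑ i, (c i : ℝ) • v i) = col := by
  classical
  obtain ⟨R₀, hR₀pos, hdense⟩ := hΛ.1
  obtain ⟨ε, hεpos, hud⟩ := hΛ.2
  -- finite ε-ball cover of the closed ball of radius R₀
  have hcomp : IsCompact (Metric.closedBall (0 : EuclideanSpace ℝ (Fin d)) R₀) :=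
    isCompact_closedBall _ _
  obtain ⟨t, ht⟩ := hcomp.elim_finite_subcover
    (fun p : EuclideanSpace ℝ (Fin d) => Metric.ball p ε)
    (fun p => Metric.isOpen_ball)
    (fun x _ => Set.mem_iUnion.2 ⟨x, Metric.mem_ball_self hεpos⟩)
  have h0mem : (0 : EuclideanSpace ℝ (Fin d)) ∈
      Metric.closedBall (0 : EuclideanSpace ℝ (Fin d)) R₀ :=
    Metric.mem_closedBall_self hR₀pos.le
  obtain ⟨p₀, hp₀t, -⟩ := Set.mem_iUnion₂.1 (ht h0mem)
  -- finite Gallai theorem with colours (Fin r) × t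
  obtain ⟨L, hGal⟩ := gallai_finite k N (Fin r × {p // p ∈ t})
  obtain ⟨s, rv, hli, hgrid⟩ := hk L
  set D : ℝ := ∑ i, (L : ℝ) * ‖rv i‖ with hD
  have hDnn : (0 : ℝ) ≤ D :=
    Finset.sum_nonneg fun i _ => mul_nonneg (Nat.cast_nonneg L) (norm_nonneg _)
  refine ⟨R₀ + D + 1, by linarith, fun χ y => ?_⟩
  -- net points of Λ near y + (grid displacement)
  choose φ hφΛ hφball using fun c : Fin k → ℕ => hdense (y + ∑ i, (c i : ℝ) • rv i)
  obtain ⟨δ, hδdef⟩ : ∃ δ : (Fin k → ℕ) → EuclideanSpace ℝ (Fin d),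
      δ = fun c => φ c - (s + ∑ i, (c i : ℝ) • rv i) := ⟨_, rfl⟩
  have hδball : ∀ c, δ c ∈ Metric.closedBall (y - s) R₀ := by
    intro c
    have hb := hφball c
    rw [Metric.mem_ball, dist_eq_norm] at hb
    rw [Metric.mem_closedBall, dist_eq_norm]
    have heq : δ c - (y - s) = φ c - (y + ∑ i, (c i : ℝ) • rv i) := by
      simp only [hδdef]; abel
    rw [heq]
    exact hb.le
  have hδΔ : ∀ c : Fin k → ℕ, (∀ i, c i ≤ L) → δ c ∈ Λ - Λ := by
    intro c hc
    have : δ c = φ c - (s + ∑ i, (c i : ℝ) • rv i) := by simp only [hδdef]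
    rw [this]
    exact Set.sub_mem_sub (hφΛ c) (hgrid c hc)
  -- cover selection
  have hcov : ∀ z ∈ Metric.closedBall (y - s) R₀,
      ∃ p ∈ t, z ∈ Metric.ball ((y - s) + p) ε := by
    intro z hz
    have hz0 : z - (y - s) ∈ Metric.closedBall (0 : EuclideanSpace ℝ (Fin d)) R₀ := by
      rw [Metric.mem_closedBall, dist_eq_norm] at hz ⊢
      simpa using hz
    obtain ⟨p, hp, hzp⟩ := Set.mem_iUnion₂.1 (ht hz0)
    refine ⟨p, hp, ?_⟩
    rw [Metric.mem_ball, dist_eq_norm] at hzp ⊢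
    have heq : z - ((y - s) + p) = z - (y - s) - p := by abel
    rw [heq]
    exact hzp
  obtain ⟨ι, hιdef⟩ : ∃ ι : EuclideanSpace ℝ (Fin d) → {p // p ∈ t},
      ι = fun z => if h : ∃ p ∈ t, z ∈ Metric.ball ((y - s) + p) ε
        then ⟨h.choose, h.choose_spec.1⟩ else ⟨p₀, hp₀t⟩ := ⟨_, rfl⟩
  have hιmem : ∀ z ∈ Metric.closedBall (y - s) R₀,
      z ∈ Metric.ball ((y - s) + (ι z : EuclideanSpace ℝ (Fin d))) ε := by
    intro z hz
    have h := hcov z hz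
    have : ι z = ⟨h.choose, h.choose_spec.1⟩ := by
      simp only [hιdef]
      rw [dif_pos h]
    rw [this]
    exact h.choose_spec.2
  -- apply finite Gallai
  obtain ⟨a, hapos, b, hbox, colp, hmono⟩ := hGal (fun c => (χ (φ c), ι (δ c)))
  have hcbox : ∀ q : Fin k → ℕ, (∀ i, q i ≤ N) → ∀ i, (a • q + b) i ≤ L := by
    intro q hq i
    simpa using hbox q hq i
  -- the defect is constant along the monochromatic copy
  have hδin : ∀ q : Fin k → ℕ, (∀ i, q i ≤ N) →
      δ (a • q + b) ∈ (Λ - Λ) ∩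
        Metric.ball ((y - s) + (colp.2 : EuclideanSpace ℝ (Fin d))) ε := by
    intro q hq
    have hsnd : ι (δ (a • q + b)) = colp.2 := congrArg Prod.snd (hmono q hq)
    have hb := hιmem _ (hδball (a • q + b))
    rw [hsnd] at hb
    exact ⟨hδΔ _ (hcbox q hq), hb⟩
  have hδconst : ∀ q : Fin k → ℕ, (∀ i, q i ≤ N) →
      δ (a • q + b) = δ (a • (fun _ => 0) + b) := by
    intro q hq
    exact hud _ (hδin q hq) (hδin (fun _ => 0) (fun i => Nat.zero_le N))
  -- assemble the AP
  refine ⟨δ (a • (fun _ => 0) + b) + s + ∑ i, (b i : ℝ) • rv i,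
    fun i => (a : ℝ) • rv i, ?_, ?_, ?_⟩
  · -- linear independence
    rw [Fintype.linearIndependent_iff] at hli ⊢
    intro g hg i
    have key : ∑ j, (g j * (a : ℤ)) • rv j = 0 := by
      rw [← hg]
      refine Finset.sum_congr rfl fun j _ => ?_
      rw [← smul_smul, ← Int.cast_smul_eq_zsmul ℝ (a : ℤ), Int.cast_natCast]
    have := hli _ key i
    rcases mul_eq_zero.1 this with h1 | h1
    · exact h1
    · exact absurd h1 (by exact_mod_cast hapos.ne')
  all_goals {
    have hpoint : ∀ q : Fin k → ℕ, (∀ i, q i ≤ N) →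
        (δ (a • (fun _ => 0) + b) + s + ∑ i, (b i : ℝ) • rv i) +
          ∑ i, (q i : ℝ) • ((a : ℝ) • rv i) = φ (a • q + b) := by
      intro q hq
      have hφeq : φ (a • q + b) = δ (a • q + b) +
          (s + ∑ i, (((a • q + b) i : ℕ) : ℝ) • rv i) := by
        simp only [hδdef]; abel
      rw [hφeq, hδconst q hq]
      have hsplit : ∑ i, (((a • q + b) i : ℕ) : ℝ) • rv i
          = ∑ i, ((q i : ℝ) • ((a : ℝ) • rv i) + (b i : ℝ) • rv i) := by
        refine Finset.sum_congr rfl fun i _ => ?_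
        have hcoord : (a • q + b) i = a * q i + b i := rfl
        rw [hcoord]
        push_cast
        rw [add_smul, smul_smul, mul_comm (q i : ℝ) (a : ℝ)]
      rw [hsplit, Finset.sum_add_distrib]
      abel
    first
    | -- membership
      (intro c hc
       rw [hpoint c hc]
       refine ⟨hφΛ _, ?_⟩
       rw [Metric.mem_ball]
       have h1 : dist (φ (a • c + b)) (y + ∑ i, (((a • c + b) i : ℕ) : ℝ) • rv i) < R₀ := by
         have := hφball (a • c + b)
         rwa [Metric.mem_ball] at this
       have h2 : ‖∑ i, (((a • c + b) i : ℕ) : ℝ) • rv i‖ ≤ D := by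
         calc ‖∑ i, (((a • c + b) i : ℕ) : ℝ) • rv i‖
             ≤ ∑ i, ‖(((a • c + b) i : ℕ) : ℝ) • rv i‖ := norm_sum_le _ _
           _ ≤ ∑ i, (L : ℝ) * ‖rv i‖ := by
               refine Finset.sum_le_sum fun i _ => ?_
               rw [norm_smul, Real.norm_natCast]
               exact mul_le_mul_of_nonneg_right
                 (by exact_mod_cast hcbox c hc i) (norm_nonneg _)
           _ = D := hD.symm
       calc dist (φ (a • c + b)) y
           ≤ dist (φ (a • c + b)) (y + ∑ i, (((a • c + b) i : ℕ) : ℝ) • rv i)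
             + dist (y + ∑ i, (((a • c + b) i : ℕ) : ℝ) • rv i) y := dist_triangle _ _ _
         _ < R₀ + (D + 1) := by
             have h3 : dist (y + ∑ i, (((a • c + b) i : ℕ) : ℝ) • rv i) y
                 = ‖∑ i, (((a • c + b) i : ℕ) : ℝ) • rv i‖ := by
               rw [dist_eq_norm]; simp
             rw [h3]
             linarith
         _ = R₀ + D + 1 := by ring)
    | -- colour
      (refine ⟨colp.1, fun c hc => ?_⟩
       rw [hpoint c hc]
       exact congrArg Prod.fst (hmono c hc))
  }
end
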